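/- Every cycle in the (L−2) × (L−2) grid of cells, when placed in the interior of the L × L grid (surrounded by a border of empty cells of width one on all sides), yields a valid partition of the L × L grid of cells into two connected regions. Hence P_{L−2}(1) ≤ G_L(1)/2, i.e., the number of self-avoiding polygons fitting inside an (L−2) × (L−2) square is at most the number of unordered partitions of the L × L grid into two connected regions. -/

import Mathlib

open Filter Topology

/-- Nearest-neighbour adjacency on the square lattice `ℤ × ℤ`. -/
def latticeGraph : SimpleGraph (ℤ × ℤ) where
  Adj a b := (a.1 = b.1 ∧ (a.2 = b.2 + 1 ∨ b.2 = a.2 + 1)) ∨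
             (a.2 = b.2 ∧ (a.1 = b.1 + 1 ∨ b.1 = a.1 + 1))
  symm := by
    constructor
    intro a b h
    rcases h with ⟨h1, h2⟩ | ⟨h1, h2⟩
    · exact Or.inl ⟨h1.symm, h2.symm⟩
    · exact Or.inr ⟨h1.symm, h2.symm⟩
  loopless := by
    constructor
    intro a h
    rcases h with ⟨-, h | h⟩ | ⟨-, h | h⟩ <;> omega

/-- The cells of an `L × L` grid, identified with their lower-left corners. -/
def cellBox (L : ℕ) : Set (ℤ × ℤ) := {p | 0 ≤ p.1 ∧ p.1 < L ∧ 0 ≤ p.2 ∧ p.2 < L}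

/-- A set of cells is connected under edge-adjacency. -/
def regionConnected (A : Set (ℤ × ℤ)) : Prop := (latticeGraph.induce A).Connected
/-- Ordered partitions of the `L × L` grid of cells into two nonempty connected regions. -/
noncomputable def numOrderedPartitions (L : ℕ) : ℕ :=
  Nat.card {p : Set (ℤ × ℤ) × Set (ℤ × ℤ) //
    p.1.Nonempty ∧ p.2.Nonempty ∧ regionConnected p.1 ∧ regionConnected p.2 ∧
    Disjoint p.1 p.2 ∧ p.1 ∪ p.2 = cellBox L}
/-- The vertices `{0,…,L} × {0,…,L}` of the `L × L` grid graph. -/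
def vtxBox (L : ℕ) : Set (ℤ × ℤ) := {p | 0 ≤ p.1 ∧ p.1 ≤ L ∧ 0 ≤ p.2 ∧ p.2 ≤ L}

/-- The `L × L` grid graph on vertex set `{0,…,L}²`, with unit-distance edges. -/
def boxGraph (L : ℕ) : SimpleGraph (ℤ × ℤ) where
  Adj a b := latticeGraph.Adj a b ∧ a ∈ vtxBox L ∧ b ∈ vtxBox L
  symm := by
    constructor
    rintro a b ⟨h1, h2, h3⟩
    exact ⟨latticeGraph.adj_symm h1, h3, h2⟩
  loopless := by
    constructor
    rintro a ⟨h, -, -⟩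
    exact latticeGraph.irrefl h
/-- Number of cycles (self-avoiding polygons) in the `L × L` grid graph,
counted as edge sets. -/
noncomputable def numCycles (L : ℕ) : ℕ :=
  Nat.card {s : Set (Sym2 (ℤ × ℤ)) //
    ∃ (v : ℤ × ℤ) (w : (boxGraph L).Walk v v), w.IsCycle ∧ {e | e ∈ w.edges} = s}


namespace SAP
open SimpleGraph

/-- vertical edge from (a,y) to (a,y+1) -/
def vE (a y : ℤ) : Sym2 (ℤ × ℤ) := s(((a : ℤ), y), (a, y + 1))
/-- horizontal edge from (x,b) to (x+1,b) -/
def hE (x b : ℤ) : Sym2 (ℤ × ℤ) := s(((x : ℤ), b), (x + 1, b))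

def inner (L : ℤ) : Set (ℤ × ℤ) := {p | 1 ≤ p.1 ∧ p.1 ≤ L - 1 ∧ 1 ≤ p.2 ∧ p.2 ≤ L - 1}

lemma vE_inj {a y a' y' : ℤ} (h : vE a y = vE a' y') : a = a' ∧ y = y' := by
  simp only [vE, Sym2.eq, Sym2.rel_iff', Prod.mk.injEq, Prod.swap_prod_mk] at h
  rcases h with ⟨⟨h1,h2⟩,h3⟩ | ⟨⟨h1,h2⟩,h3,h4⟩ <;> constructor <;> omega

lemma hE_inj {x b x' b' : ℤ} (h : hE x b = hE x' b') : x = x' ∧ b = b' := by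
  simp only [hE, Sym2.eq, Sym2.rel_iff', Prod.mk.injEq, Prod.swap_prod_mk] at h
  rcases h with ⟨⟨h1,h2⟩,h3⟩ | ⟨⟨h1,h2⟩,h3,h4⟩ <;> constructor <;> omega

lemma vE_ne_hE {a y x b : ℤ} : vE a y ≠ hE x b := by
  simp only [vE, hE, Sym2.eq, Sym2.rel_iff', Prod.mk.injEq, Prod.swap_prod_mk, ne_eq]
  rintro (⟨⟨h1,h2⟩,h3,h4⟩ | ⟨⟨h1,h2⟩,h3,h4⟩) <;> omega

variable (L : ℤ) (F : Finset (Sym2 (ℤ × ℤ)))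

/-- conditions on the edge set coming from a cycle in the inner box -/
structure Good : Prop where
  shape : ∀ e ∈ F, ∃ u v : ℤ × ℤ, latticeGraph.Adj u v ∧ u ∈ inner L ∧ v ∈ inner L ∧ e = s(u, v)
  even : ∀ v : ℤ × ℤ, Even ((F.filter (fun e => v ∈ e)).card)

lemma Good.edge_form (hF : Good L F) {e : Sym2 (ℤ × ℤ)} (he : e ∈ F) :
    (∃ a y, 1 ≤ a ∧ a ≤ L - 1 ∧ 1 ≤ y ∧ y + 1 ≤ L - 1 ∧ e = vE a y) ∨
    (∃ x b, 1 ≤ x ∧ x + 1 ≤ L - 1 ∧ 1 ≤ b ∧ b ≤ L - 1 ∧ e = hE x b) := by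
  obtain ⟨u, v, hadj, hu, hv, rfl⟩ := hF.shape e he
  obtain ⟨hu1, hu2, hu3, hu4⟩ := hu
  obtain ⟨hv1, hv2, hv3, hv4⟩ := hv
  rcases hadj with ⟨h1, h2 | h2⟩ | ⟨h1, h2 | h2⟩
  · refine Or.inl ⟨v.1, v.2, by omega, by omega, by omega, by omega, ?_⟩
    have hu' : u = (v.1, v.2 + 1) := Prod.ext_iff.mpr ⟨by omega, by omega⟩
    simp only [vE]; rw [hu', Sym2.eq_swap, Prod.mk.eta]
  · refine Or.inl ⟨u.1, u.2, by omega, by omega, by omega, by omega, ?_⟩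
    have hv' : v = (u.1, u.2 + 1) := Prod.ext_iff.mpr ⟨by omega, by omega⟩
    simp only [vE]; rw [hv', Prod.mk.eta]
  · refine Or.inr ⟨v.1, v.2, by omega, by omega, by omega, by omega, ?_⟩
    have hu' : u = (v.1 + 1, v.2) := Prod.ext_iff.mpr ⟨by omega, by omega⟩
    simp only [hE]; rw [hu', Sym2.eq_swap, Prod.mk.eta]
  · refine Or.inr ⟨u.1, u.2, by omega, by omega, by omega, by omega, ?_⟩
    have hv' : v = (u.1 + 1, u.2) := Prod.ext_iff.mpr ⟨by omega, by omega⟩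
    simp only [hE]; rw [hv', Prod.mk.eta]

lemma Good.vE_bounds (hF : Good L F) {a y : ℤ} (h : vE a y ∈ F) :
    1 ≤ a ∧ a ≤ L - 1 ∧ 1 ≤ y ∧ y + 1 ≤ L - 1 := by
  rcases hF.edge_form L F h with ⟨a', y', h1, h2, h3, h4, he⟩ | ⟨x, b, h1, h2, h3, h4, he⟩
  · obtain ⟨rfl, rfl⟩ := vE_inj he; exact ⟨h1, h2, h3, h4⟩
  · exact absurd he vE_ne_hE

lemma Good.hE_bounds (hF : Good L F) {x b : ℤ} (h : hE x b ∈ F) :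
    1 ≤ x ∧ x + 1 ≤ L - 1 ∧ 1 ≤ b ∧ b ≤ L - 1 := by
  rcases hF.edge_form L F h with ⟨a', y', h1, h2, h3, h4, he⟩ | ⟨x', b', h1, h2, h3, h4, he⟩
  · exact absurd he.symm vE_ne_hE
  · obtain ⟨rfl, rfl⟩ := hE_inj he; exact ⟨h1, h2, h3, h4⟩

end SAP
namespace SAP

variable (L : ℤ) (F : Finset (Sym2 (ℤ × ℤ)))

/-- crossing parity of the cell `p` : number of vertical edges of `F` crossed by a
leftward ray from the centre of cell `p`. -/
noncomputable def chi (p : ℤ × ℤ) : ZMod 2 :=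
  (((Finset.Icc 1 p.1).filter (fun a => vE a p.2 ∈ F)).card : ZMod 2)

noncomputable def ind (e : Sym2 (ℤ × ℤ)) : ZMod 2 := if e ∈ F then 1 else 0

lemma ind_eq_zero {e : Sym2 (ℤ × ℤ)} (h : e ∉ F) : ind F e = 0 := by simp [ind, h]

lemma ind_eq_one {e : Sym2 (ℤ × ℤ)} (h : e ∈ F) : ind F e = 1 := by simp [ind, h]

lemma chi_eq_sum (p : ℤ × ℤ) : chi F p = ∑ a ∈ Finset.Icc 1 p.1, ind F (vE a p.2) := by
  rw [chi, Finset.card_filter]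
  push_cast
  rfl

lemma chi_eq_sum' (x y : ℤ) : chi F (x, y) = ∑ a ∈ Finset.Icc 1 x, ind F (vE a y) :=
  chi_eq_sum F (x, y)

lemma chi_flip_h (x y : ℤ) (hx : 0 ≤ x) :
    chi F (x + 1, y) = chi F (x, y) + ind F (vE (x + 1) y) := by
  have hins : Finset.Icc (1:ℤ) (x+1) = insert (x+1) (Finset.Icc 1 x) := by
    ext a; simp only [Finset.mem_Icc, Finset.mem_insert]; omega
  have hnm : (x+1) ∉ Finset.Icc (1:ℤ) x := by simp
  rw [chi_eq_sum, chi_eq_sum]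
  simp only [hins, Finset.sum_insert hnm]
  ring

lemma even_cast_zero {n : ℕ} (h : Even n) : (n : ZMod 2) = 0 := by
  obtain ⟨k, rfl⟩ := h
  have h2 : ((k + k : ℕ) : ZMod 2) = 2 * (k : ZMod 2) := by push_cast; ring
  rw [h2, show (2 : ZMod 2) = 0 from rfl]
  exact zero_mul _

lemma deg4 (hF : Good L F) (u : ℤ × ℤ) :
    ind F (vE u.1 (u.2 - 1)) + ind F (vE u.1 u.2) +
      ind F (hE (u.1 - 1) u.2) + ind F (hE u.1 u.2) = 0 := by
  classical
  set d := vE u.1 (u.2 - 1) with hd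
  set e1 := vE u.1 u.2 with he1
  set e2 := hE (u.1 - 1) u.2 with he2
  set e3 := hE u.1 u.2 with he3
  have hmem : ∀ e, u ∈ e → e ∈ F → e = d ∨ e = e1 ∨ e = e2 ∨ e = e3 := by
    intro e hu he
    rcases hF.edge_form L F he with ⟨a, y, _, _, _, _, rfl⟩ | ⟨a, b, _, _, _, _, rfl⟩
    · rw [vE, Sym2.mem_iff] at hu
      rcases hu with h | h
      · refine Or.inr (Or.inl ?_)
        subst h; rfl
      · refine Or.inl ?_
        subst h
        show vE a y = vE a (y + 1 - 1)
        congr 1; omega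
    · rw [hE, Sym2.mem_iff] at hu
      rcases hu with h | h
      · refine Or.inr (Or.inr (Or.inr ?_))
        subst h; rfl
      · refine Or.inr (Or.inr (Or.inl ?_))
        subst h
        show hE a b = hE (a + 1 - 1) b
        congr 1; omega
  have humem : ∀ e, e = d ∨ e = e1 ∨ e = e2 ∨ e = e3 → u ∈ e := by
    rintro e (rfl | rfl | rfl | rfl)
    · rw [hd, vE, Sym2.mem_iff]; right
      exact Prod.ext_iff.mpr ⟨rfl, by ring⟩
    · rw [he1, vE, Sym2.mem_iff]; left; exact (Prod.mk.eta).symm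
    · rw [he2, hE, Sym2.mem_iff]; right
      exact Prod.ext_iff.mpr ⟨by ring, rfl⟩
    · rw [he3, hE, Sym2.mem_iff]; left; exact (Prod.mk.eta).symm
  have hset : F.filter (fun e => u ∈ e) = ({d, e1, e2, e3} : Finset _).filter (· ∈ F) := by
    ext e
    simp only [Finset.mem_filter, Finset.mem_insert, Finset.mem_singleton]
    constructor
    · rintro ⟨hf, hu⟩
      exact ⟨hmem e hu hf, hf⟩
    · rintro ⟨hm, hf⟩
      exact ⟨hf, humem e hm⟩
  have hde1 : d ≠ e1 := fun h => by have := vE_inj h; omega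
  have hde2 : d ≠ e2 := vE_ne_hE
  have hde3 : d ≠ e3 := vE_ne_hE
  have he12 : e1 ≠ e2 := vE_ne_hE
  have he13 : e1 ≠ e3 := vE_ne_hE
  have he23 : e2 ≠ e3 := fun h => by have := hE_inj h; omega
  have hcard : ((({d, e1, e2, e3} : Finset _).filter (· ∈ F)).card : ZMod 2)
      = ind F d + ind F e1 + ind F e2 + ind F e3 := by
    rw [Finset.card_filter]
    rw [Finset.sum_insert (by simp [hde1, hde2, hde3]),
        Finset.sum_insert (by simp [he12, he13]),
        Finset.sum_insert (by simp [he23]), Finset.sum_singleton]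
    push_cast
    simp only [ind]
    ring
  have heven := even_cast_zero (hF.even u)
  rw [hset] at heven
  rw [hcard] at heven
  linear_combination heven

lemma tele_nat (f : ℤ → ZMod 2) : ∀ n : ℕ,
    ∑ a ∈ Finset.Icc 1 (n : ℤ), (f (a - 1) + f a) = f 0 + f n := by
  intro n
  induction n with
  | zero =>
      rw [show ((0:ℕ):ℤ) = 0 by rfl, Finset.Icc_eq_empty (by norm_num), Finset.sum_empty]
      exact (CharTwo.add_self_eq_zero _).symm
  | succ n ih =>
      have hins : Finset.Icc (1:ℤ) ((n:ℤ)+1) = insert ((n:ℤ)+1) (Finset.Icc 1 (n:ℤ)) := by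
        ext a; simp only [Finset.mem_Icc, Finset.mem_insert]; omega
      have hnm : ((n:ℤ)+1) ∉ Finset.Icc (1:ℤ) (n:ℤ) := by simp
      push_cast
      rw [hins, Finset.sum_insert hnm, ih]
      have h1 : (n:ℤ) + 1 - 1 = (n:ℤ) := by ring
      rw [h1]
      have h2 : f n + f n = 0 := CharTwo.add_self_eq_zero _
      linear_combination h2

lemma tele (f : ℤ → ZMod 2) (x : ℤ) (hx : 0 ≤ x) :
    ∑ a ∈ Finset.Icc 1 x, (f (a - 1) + f a) = f 0 + f x := by
  obtain ⟨n, rfl⟩ := Int.eq_ofNat_of_zero_le hx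
  exact tele_nat f n

lemma chi_flip_v (hF : Good L F) (x y : ℤ) (hx : 0 ≤ x) :
    chi F (x, y + 1) = chi F (x, y) + ind F (hE x (y + 1)) := by
  have hsum : ∑ a ∈ Finset.Icc 1 x,
      (ind F (vE a y) + ind F (vE a (y+1)) + ind F (hE (a-1) (y+1)) + ind F (hE a (y+1))) = 0 := by
    rw [Finset.sum_eq_zero]
    intro a _
    have := deg4 L F hF (a, y + 1)
    simpa using this
  have hLHS : ∑ a ∈ Finset.Icc 1 x,
      (ind F (vE a y) + ind F (vE a (y+1)) + ind F (hE (a-1) (y+1)) + ind F (hE a (y+1)))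
      = chi F (x, y) + chi F (x, y+1)
        + ∑ a ∈ Finset.Icc 1 x, (ind F (hE (a-1) (y+1)) + ind F (hE a (y+1))) := by
    rw [chi_eq_sum', chi_eq_sum', ← Finset.sum_add_distrib, ← Finset.sum_add_distrib]
    exact Finset.sum_congr rfl (fun a _ => by ring)
  have htele := tele (fun a => ind F (hE a (y+1))) x hx
  have h0 : ind F (hE 0 (y+1)) = 0 := by
    apply ind_eq_zero
    intro h
    have := hF.hE_bounds L F h
    omega
  rw [hLHS, htele] at hsum
  have hsum' : chi F (x, y) + chi F (x, y+1) + (ind F (hE 0 (y+1)) + ind F (hE x (y+1))) = 0 := by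
    simpa using hsum
  rw [h0] at hsum'
  have h2 : (2 : ZMod 2) = 0 := rfl
  linear_combination hsum' - h2 * (chi F (x, y) + ind F (hE x (y+1)))

end SAP
namespace SAP
open SimpleGraph

variable (L : ℤ) (F : Finset (Sym2 (ℤ × ℤ)))

lemma chi_left {x y : ℤ} (hx : x ≤ 0) : chi F (x, y) = 0 := by
  rw [chi_eq_sum', Finset.Icc_eq_empty (by omega), Finset.sum_empty]

lemma chi_bottom (hF : Good L F) {x y : ℤ} (hy : y ≤ 0) : chi F (x, y) = 0 := by
  rw [chi_eq_sum', Finset.sum_eq_zero, ]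
  intro a _
  exact ind_eq_zero F (fun h => by have := hF.vE_bounds L F h; omega)

lemma chi_top (hF : Good L F) {x y : ℤ} (hy : L - 1 ≤ y) : chi F (x, y) = 0 := by
  rw [chi_eq_sum', Finset.sum_eq_zero]
  intro a _
  exact ind_eq_zero F (fun h => by have := hF.vE_bounds L F h; omega)

lemma chi_right (hF : Good L F) (hL : 1 ≤ L) (y : ℤ) : chi F (L - 1, y) = 0 := by
  have key : ∀ n : ℕ, ∀ y : ℤ, L - 1 - n ≤ y → chi F (L - 1, y) = 0 := by
    intro n
    induction n with
    | zero => intro y hy; exact chi_top L F hF (by omega)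
    | succ n ih =>
        intro y hy
        by_cases h : L - 1 - n ≤ y
        · exact ih y h
        · have h1 : chi F (L-1, y + 1) = chi F (L-1, y) + ind F (hE (L-1) (y+1)) :=
            chi_flip_v L F hF (L-1) y (by omega)
          have h2 : ind F (hE (L-1) (y+1)) = 0 :=
            ind_eq_zero F (fun hh => by have := hF.hE_bounds L F hh; omega)
          have h3 := ih (y+1) (by omega)
          rw [h2, add_zero] at h1
          rw [← h1, h3]
  by_cases h : L - 1 ≤ y
  · exact chi_top L F hF h
  · exact key (L - 1 - y).toNat y (by omega)

lemma zmod2_cases (a : ZMod 2) : a = 0 ∨ a = 1 := by revert a; decide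

lemma zmod2_ne_iff {a b : ZMod 2} : a ≠ b ↔ a = b + 1 := by revert a b; decide

lemma chi_ne_h (x y : ℤ) (hx : 0 ≤ x) :
    chi F (x, y) ≠ chi F (x + 1, y) ↔ vE (x + 1) y ∈ F := by
  rw [chi_flip_h F x y hx]
  by_cases h : vE (x+1) y ∈ F
  · rw [ind_eq_one F h]
    simp only [h, iff_true]
    rw [zmod2_ne_iff, add_assoc, show ((1:ZMod 2) + 1) = 0 from rfl, add_zero]
  · rw [ind_eq_zero F h, add_zero]
    simp [h]

lemma chi_ne_v (hF : Good L F) (x y : ℤ) (hx : 0 ≤ x) :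
    chi F (x, y) ≠ chi F (x, y + 1) ↔ hE x (y + 1) ∈ F := by
  rw [chi_flip_v L F hF x y hx]
  by_cases h : hE x (y+1) ∈ F
  · rw [ind_eq_one F h]
    simp only [h, iff_true]
    rw [zmod2_ne_iff, add_assoc, show ((1:ZMod 2) + 1) = 0 from rfl, add_zero]
  · rw [ind_eq_zero F h, add_zero]
    simp [h]

/-- the box of cells, integer version -/
def box (L : ℤ) : Set (ℤ × ℤ) := {p | 0 ≤ p.1 ∧ p.1 < L ∧ 0 ≤ p.2 ∧ p.2 < L}

/-- two cells lie in the same component of the induced graph on `A` -/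
def SameComp (A : Set (ℤ × ℤ)) (c c' : ℤ × ℤ) : Prop :=
  ∃ (h : c ∈ A) (h' : c' ∈ A), (latticeGraph.induce A).Reachable ⟨c, h⟩ ⟨c', h'⟩

lemma SameComp.rfl {A : Set (ℤ × ℤ)} {c : ℤ × ℤ} (h : c ∈ A) : SameComp A c c :=
  ⟨h, h, SimpleGraph.Reachable.refl _⟩

lemma SameComp.symm {A : Set (ℤ × ℤ)} {c c' : ℤ × ℤ} (h : SameComp A c c') : SameComp A c' c := by
  obtain ⟨h1, h2, h3⟩ := h
  exact ⟨h2, h1, h3.symm⟩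

lemma SameComp.trans {A : Set (ℤ × ℤ)} {c c' c'' : ℤ × ℤ}
    (h : SameComp A c c') (h' : SameComp A c' c'') : SameComp A c c'' := by
  obtain ⟨h1, h2, h3⟩ := h
  obtain ⟨h4, h5, h6⟩ := h'
  exact ⟨h1, h5, h3.trans h6⟩

lemma SameComp.adj {A : Set (ℤ × ℤ)} {c c' : ℤ × ℤ} (h : c ∈ A) (h' : c' ∈ A)
    (hadj : latticeGraph.Adj c c') : SameComp A c c' := by
  refine ⟨h, h', SimpleGraph.Adj.reachable ?_⟩
  simpa using hadj

lemma adj_right (x y : ℤ) : latticeGraph.Adj (x, y) (x + 1, y) := Or.inr ⟨rfl, Or.inr rfl⟩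
lemma adj_up (x y : ℤ) : latticeGraph.Adj (x, y) (x, y + 1) := Or.inl ⟨rfl, Or.inr rfl⟩

end SAP
namespace SAP
open SimpleGraph

section WalkLemmas

variable {V : Type*} [DecidableEq V] {G : SimpleGraph V}

/-- indicator count of edges at a vertex along a walk, with multiplicity -/
def incCount (x : V) (l : List (Sym2 V)) : ℕ :=
  (l.map (fun e => if x ∈ e then (1:ℕ) else 0)).sum

lemma incCount_parity {u b : V} (w : G.Walk u b) (x : V) :
    (incCount x w.edges + (if u = x then 1 else 0) + (if b = x then 1 else 0)) % 2 = 0 := by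
  induction w with
  | nil =>
      rename_i w
      by_cases h : w = x <;> simp [incCount, h]
  | @cons u c b h p ih =>
      rw [Walk.edges_cons]
      have hne : u ≠ c := h.ne
      have hsplit : (if x ∈ s(u, c) then (1:ℕ) else 0)
          = (if u = x then 1 else 0) + (if c = x then 1 else 0) := by
        rcases eq_or_ne u x with h1 | h1
        · subst h1
          have h2 : c ≠ u := fun hc => hne hc.symm
          simp [Sym2.mem_iff, h2]
        · rcases eq_or_ne c x with h2 | h2
          · subst h2
            simp [Sym2.mem_iff, hne]
          · simp [Sym2.mem_iff, h1, h2, h1.symm, h2.symm]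
      have : incCount x (s(u,c) :: p.edges)
          = (if x ∈ s(u, c) then (1:ℕ) else 0) + incCount x p.edges := by
        simp [incCount]
      rw [this, hsplit]
      omega

lemma incCount_eq_zero {u b : V} (w : G.Walk u b) (x : V) (hx : x ∉ w.support) :
    incCount x w.edges = 0 := by
  rw [incCount, List.sum_eq_zero]
  intro n hn
  rw [List.mem_map] at hn
  obtain ⟨e, he, rfl⟩ := hn
  rw [if_neg]
  intro hxe
  obtain ⟨y, rfl⟩ := Sym2.mem_iff_exists.mp hxe
  exact hx (w.fst_mem_support_of_mem_edges he)

lemma path_incCount_le {u b : V} (p : G.Walk u b) (hp : p.IsPath) (x : V) :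
    incCount x p.edges ≤ if x = u ∨ x = b then 1 else 2 := by
  induction p with
  | nil => simp [incCount]
  | @cons u c b h q ih =>
      rw [Walk.cons_isPath_iff] at hp
      obtain ⟨hq, hu⟩ := hp
      have hval : incCount x ((Walk.cons h q).edges)
          = (if x ∈ s(u, c) then (1:ℕ) else 0) + incCount x q.edges := by
        simp [incCount]
      rw [hval]
      by_cases h1 : x = u
      · subst h1
        have h0 : incCount x q.edges = 0 := incCount_eq_zero q x hu
        simp [h0]
      · have hxm : (if x ∈ s(u, c) then (1:ℕ) else 0) = if x = c then 1 else 0 := by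
          by_cases h2 : x = c <;> simp [Sym2.mem_iff, h1, h2]
        rw [hxm]
        have hRHS : (if x = u ∨ x = b then (1:ℕ) else 2) = if x = b then 1 else 2 := by
          by_cases h3 : x = b <;> simp [h1, h3]
        rw [hRHS]
        by_cases h3 : x = b
        · rw [if_pos h3]
          subst h3
          by_cases h2 : x = c
          · subst h2
            have hq0 : q = Walk.nil := Walk.isPath_iff_eq_nil.mp hq
            simp [hq0, incCount]
          · rw [if_neg h2]
            have := ih hq
            rw [if_pos (Or.inr rfl)] at this
            omega
        · rw [if_neg h3]
          by_cases h2 : x = c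
          · rw [if_pos h2]
            have := ih hq
            rw [if_pos (Or.inl h2)] at this
            omega
          · rw [if_neg h2]
            have := ih hq
            rw [if_neg (by tauto)] at this
            omega

end WalkLemmas
end SAP
namespace SAP
open SimpleGraph

section CycleLemmas

variable {V : Type*} [DecidableEq V] {G : SimpleGraph V}

lemma filter_toFinset_card (l : List (Sym2 V)) (hl : l.Nodup) (x : V) :
    ((l.toFinset.filter (fun e => x ∈ e)).card) = incCount x l := by
  rw [Finset.card_filter, incCount, List.sum_toFinset _ hl]

lemma cycle_even_deg {v : V} (w : G.Walk v v) (hw : w.IsCycle) (x : V) :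
    Even ((w.edges.toFinset.filter (fun e => x ∈ e)).card) := by
  rw [filter_toFinset_card _ hw.isTrail.edges_nodup]
  have := incCount_parity w x
  rw [Nat.even_iff]
  by_cases h : v = x <;> simp [h] at this <;> omega

lemma cycle_inc_le_two {v : V} (w : G.Walk v v) (hw : w.IsCycle) (x : V) :
    ((w.edges.toFinset.filter (fun e => x ∈ e)).card) ≤ 2 := by
  rw [filter_toFinset_card _ hw.isTrail.edges_nodup]
  cases w with
  | nil => exact absurd hw (Walk.IsCycle.not_of_nil)
  | @cons v c v' h p =>
      rw [Walk.cons_isCycle_iff] at hw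
      obtain ⟨hp, -⟩ := hw
      have hval : incCount x ((Walk.cons h p).edges)
          = (if x ∈ s(v, c) then (1:ℕ) else 0) + incCount x p.edges := by
        simp [incCount]
      rw [hval]
      have hb := path_incCount_le p hp x
      by_cases h1 : x ∈ s(v, c)
      · rw [if_pos h1]
        rw [Sym2.mem_iff] at h1
        have : x = c ∨ x = v := by tauto
        rw [if_pos this] at hb
        omega
      · rw [if_neg h1]
        by_cases h2 : x = c ∨ x = v
        · rw [if_pos h2] at hb; omega
        · rw [if_neg h2] at hb; omega

/-- in a cycle, the only two edges through a vertex are the two known ones -/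
lemma cycle_only_two {v : V} (w : G.Walk v v) (hw : w.IsCycle) {x : V}
    {e1 e2 e : Sym2 V} (h12 : e1 ≠ e2)
    (he1 : e1 ∈ w.edges.toFinset) (he2 : e2 ∈ w.edges.toFinset) (he : e ∈ w.edges.toFinset)
    (hx1 : x ∈ e1) (hx2 : x ∈ e2) (hx : x ∈ e) : e = e1 ∨ e = e2 := by
  by_contra hcon
  push_neg at hcon
  obtain ⟨hne1, hne2⟩ := hcon
  have hsub : ({e, e1, e2} : Finset (Sym2 V)) ⊆ w.edges.toFinset.filter (fun e => x ∈ e) := by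
    intro a ha
    simp only [Finset.mem_insert, Finset.mem_singleton] at ha
    rcases ha with rfl | rfl | rfl <;> simp [Finset.mem_filter, he, he1, he2, hx, hx1, hx2]
  have hcard : ({e, e1, e2} : Finset (Sym2 V)).card = 3 := by
    rw [Finset.card_insert_of_notMem (by simp [hne1, hne2]),
        Finset.card_insert_of_notMem (by simp [h12]), Finset.card_singleton]
  have := Finset.card_le_card hsub
  have h2 := cycle_inc_le_two w hw x
  omega

end CycleLemmas
end SAP
namespace SAP
open SimpleGraph

variable (L : ℤ) (F : Finset (Sym2 (ℤ × ℤ)))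

/-- the cell to the left of the directed step `u → v` -/
def leftCell (u v : ℤ × ℤ) : ℤ × ℤ :=
  if v.1 = u.1 + 1 then (u.1, u.2)
  else if v.2 = u.2 + 1 then (u.1 - 1, u.2)
  else if u.1 = v.1 + 1 then (v.1, v.2 - 1)
  else (u.1, u.2 - 1)

lemma leftCell_east {a b a' : ℤ} (h : a' = a + 1) : leftCell (a, b) (a', b) = (a, b) := by
  subst h; simp [leftCell]

lemma leftCell_north {a b b' : ℤ} (h : b' = b + 1) : leftCell (a, b) (a, b') = (a - 1, b) := by
  subst h
  rw [leftCell, if_neg (by simp), if_pos (by simp)]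

lemma leftCell_west {a b a' : ℤ} (h : a' = a + 1) : leftCell (a', b) (a, b) = (a, b - 1) := by
  subst h
  rw [leftCell, if_neg (by simp; omega), if_neg (by simp), if_pos (by simp)]

lemma leftCell_south {a b b' : ℤ} (h : b' = b + 1) : leftCell (a, b') (a, b) = (a, b) := by
  subst h
  rw [leftCell, if_neg (by simp), if_neg (by simp; omega), if_neg (by simp)]
  simp

lemma hE_eq {x x' b : ℤ} (h : x' = x + 1) : s(((x:ℤ), b), (x', b)) = hE x b := by subst h; rfl
lemma hE_eq' {x x' b : ℤ} (h : x' = x + 1) : s(((x':ℤ), b), (x, b)) = hE x b := by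
  subst h; rw [Sym2.eq_swap]; rfl
lemma vE_eq {a y y' : ℤ} (h : y' = y + 1) : s(((a:ℤ), y), (a, y')) = vE a y := by subst h; rfl
lemma vE_eq' {a y y' : ℤ} (h : y' = y + 1) : s(((a:ℤ), y'), (a, y)) = vE a y := by
  subst h; rw [Sym2.eq_swap]; rfl

lemma mem_vE_bot (a y : ℤ) : ((a : ℤ), y) ∈ vE a y := by
  rw [vE, Sym2.mem_iff]; left; rfl
lemma mem_vE_top {a y y' : ℤ} (h : y' = y + 1) : ((a : ℤ), y') ∈ vE a y := by
  subst h; rw [vE, Sym2.mem_iff]; right; rfl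
lemma mem_hE_left (x b : ℤ) : ((x : ℤ), b) ∈ hE x b := by
  rw [hE, Sym2.mem_iff]; left; rfl
lemma mem_hE_right {x x' b : ℤ} (h : x' = x + 1) : ((x' : ℤ), b) ∈ hE x b := by
  subst h; rw [hE, Sym2.mem_iff]; right; rfl

/-- two cells lie in the same chi-class component -/
def Rel (c c' : ℤ × ℤ) : Prop :=
  chi F c = chi F c' ∧ SameComp {m | m ∈ box L ∧ chi F m = chi F c} c c'

lemma Rel.refl' {c : ℤ × ℤ} (h : c ∈ box L) : Rel L F c c :=
  ⟨rfl, SameComp.rfl ⟨h, rfl⟩⟩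

lemma Rel.symm' {c c' : ℤ × ℤ} (h : Rel L F c c') : Rel L F c' c := by
  obtain ⟨h1, h2⟩ := h
  refine ⟨h1.symm, ?_⟩
  have hset : {m | m ∈ box L ∧ chi F m = chi F c'} = {m | m ∈ box L ∧ chi F m = chi F c} := by
    rw [h1]
  rw [hset]
  exact h2.symm

lemma Rel.trans' {c c' c'' : ℤ × ℤ} (h : Rel L F c c') (h' : Rel L F c' c'') :
    Rel L F c c'' := by
  obtain ⟨h1, h2⟩ := h
  obtain ⟨h3, h4⟩ := h'
  refine ⟨h1.trans h3, ?_⟩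
  have hset : {m | m ∈ box L ∧ chi F m = chi F c'} = {m | m ∈ box L ∧ chi F m = chi F c} := by
    rw [h1]
  rw [hset] at h4
  exact h2.trans h4

lemma Rel.adj' {c c' : ℤ × ℤ} (hc : c ∈ box L) (hc' : c' ∈ box L)
    (heq : chi F c = chi F c') (hadj : latticeGraph.Adj c c') : Rel L F c c' :=
  ⟨heq, SameComp.adj ⟨hc, rfl⟩ ⟨hc', heq.symm⟩ hadj⟩

/-- horizontally adjacent cells with the separating edge absent are related -/
lemma rel_adj_h {x x' y : ℤ} (h : x' = x + 1) (hx : 0 ≤ x)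
    (hb1 : (x, y) ∈ box L) (hb2 : (x', y) ∈ box L) (hnF : vE x' y ∉ F) :
    Rel L F (x, y) (x', y) := by
  subst h
  have heq : chi F (x, y) = chi F (x + 1, y) := by
    by_contra hne
    exact hnF ((chi_ne_h F x y hx).mp hne)
  exact Rel.adj' L F hb1 hb2 heq (adj_right x y)

lemma rel_adj_v (hF : Good L F) {x y y' : ℤ} (h : y' = y + 1) (hx : 0 ≤ x)
    (hb1 : (x, y) ∈ box L) (hb2 : (x, y') ∈ box L) (hnF : hE x y' ∉ F) :
    Rel L F (x, y) (x, y') := by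
  subst h
  have heq : chi F (x, y) = chi F (x, y + 1) := by
    by_contra hne
    exact hnF ((chi_ne_v L F hF x y hx).mp hne)
  exact Rel.adj' L F hb1 hb2 heq (adj_up x y)

lemma neighbor_cases {u : ℤ × ℤ} {a b : ℤ} (h : latticeGraph.Adj u (a, b)) :
    u = (a + 1, b) ∨ u = (a - 1, b) ∨ u = (a, b + 1) ∨ u = (a, b - 1) := by
  rcases h with ⟨h1, h2 | h2⟩ | ⟨h1, h2 | h2⟩
  · have h1' : u.1 = a := h1
    have h2' : u.2 = b + 1 := h2
    exact Or.inr (Or.inr (Or.inl (Prod.ext_iff.mpr ⟨h1', h2'⟩)))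
  · have h1' : u.1 = a := h1
    have h2' : b = u.2 + 1 := h2
    exact Or.inr (Or.inr (Or.inr (Prod.ext_iff.mpr ⟨h1', by omega⟩)))
  · have h1' : u.2 = b := h1
    have h2' : u.1 = a + 1 := h2
    exact Or.inl (Prod.ext_iff.mpr ⟨h2', h1'⟩)
  · have h1' : u.2 = b := h1
    have h2' : a = u.1 + 1 := h2
    exact Or.inr (Or.inl (Prod.ext_iff.mpr ⟨by omega, h1'⟩))

end SAP
namespace SAP
open SimpleGraph

variable (L : ℤ) (F : Finset (Sym2 (ℤ × ℤ)))

lemma step (hF : Good L F) {u v t : ℤ × ℤ}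
    (huv : latticeGraph.Adj u v) (hvt : latticeGraph.Adj v t)
    (h1 : s(u, v) ∈ F) (h2 : s(v, t) ∈ F) (hne : s(u, v) ≠ s(v, t))
    (honly : ∀ e ∈ F, v ∈ e → e = s(u, v) ∨ e = s(v, t))
    (hv : v ∈ inner L) :
    Rel L F (leftCell u v) (leftCell v t) := by
  obtain ⟨a, b⟩ := v
  obtain ⟨ha1, ha2, hb1, hb2⟩ := hv
  have Ha1 : 1 ≤ a := ha1
  have Ha2 : a ≤ L - 1 := ha2
  have Hb1 : 1 ≤ b := hb1
  have Hb2 : b ≤ L - 1 := hb2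
  have hbox00 : ((a, b) : ℤ × ℤ) ∈ box L :=
    ⟨show (0:ℤ) ≤ a by omega, show a < L by omega, show (0:ℤ) ≤ b by omega, show b < L by omega⟩
  have hboxm0 : ((a - 1, b) : ℤ × ℤ) ∈ box L :=
    ⟨show (0:ℤ) ≤ a - 1 by omega, show a - 1 < L by omega,
     show (0:ℤ) ≤ b by omega, show b < L by omega⟩
  have hbox0m : ((a, b - 1) : ℤ × ℤ) ∈ box L :=
    ⟨show (0:ℤ) ≤ a by omega, show a < L by omega,
     show (0:ℤ) ≤ b - 1 by omega, show b - 1 < L by omega⟩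
  have hboxmm : ((a - 1, b - 1) : ℤ × ℤ) ∈ box L :=
    ⟨show (0:ℤ) ≤ a - 1 by omega, show a - 1 < L by omega,
     show (0:ℤ) ≤ b - 1 by omega, show b - 1 < L by omega⟩
  have hmvab : ((a, b) : ℤ × ℤ) ∈ vE a b := mem_vE_bot a b
  have hmvabm : ((a, b) : ℤ × ℤ) ∈ vE a (b - 1) := mem_vE_top (by ring)
  have hmhab : ((a, b) : ℤ × ℤ) ∈ hE a b := mem_hE_left a b
  have hmham : ((a, b) : ℤ × ℤ) ∈ hE (a - 1) b := mem_hE_right (by ring)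
  rcases neighbor_cases huv with rfl | rfl | rfl | rfl <;>
    rcases neighbor_cases hvt.symm with rfl | rfl | rfl | rfl
  -- arrival W (u = (a+1,b))
  · -- dep E: t = (a+1,b) : reversal
    exact absurd (Sym2.eq_swap) hne
  · -- dep W: t = (a-1,b) : straight west
    have heuv : s(((a+1:ℤ), b), ((a:ℤ), b)) = hE a b := hE_eq' rfl
    have hevt : s(((a:ℤ), b), ((a-1:ℤ), b)) = hE (a - 1) b := hE_eq' (by ring)
    rw [leftCell_west rfl, leftCell_west (show a = (a-1)+1 by ring)]
    have hn : vE a (b - 1) ∉ F := by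
      intro hm
      rcases honly _ hm hmvabm with he | he
      · rw [heuv] at he; exact vE_ne_hE he
      · rw [hevt] at he; exact vE_ne_hE he
    exact Rel.symm' L F (rel_adj_h L F (show a = (a-1)+1 by ring) (by omega) hboxmm hbox0m hn)
  · -- dep N: t = (a,b+1) : right turn (arr W, dep N), corner (a-1,b-1)
    have heuv : s(((a+1:ℤ), b), ((a:ℤ), b)) = hE a b := hE_eq' rfl
    have hevt : s(((a:ℤ), b), ((a:ℤ), b+1)) = vE a b := vE_eq rfl
    rw [leftCell_west rfl, leftCell_north rfl]
    have hn1 : vE a (b - 1) ∉ F := by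
      intro hm
      rcases honly _ hm hmvabm with he | he
      · rw [heuv] at he; exact vE_ne_hE he
      · rw [hevt] at he; have := vE_inj he; omega
    have hn2 : hE (a - 1) b ∉ F := by
      intro hm
      rcases honly _ hm hmham with he | he
      · rw [heuv] at he; have := hE_inj he; omega
      · rw [hevt] at he; exact vE_ne_hE he.symm
    refine Rel.trans' L F (Rel.symm' L F (rel_adj_h L F (show a = (a-1)+1 by ring) (by omega)
      hboxmm hbox0m hn1)) ?_
    exact rel_adj_v L F hF (show b = (b-1)+1 by ring) (by omega) hboxmm hboxm0 hn2
  · -- dep S: t = (a,b-1) : left turn (arr W, dep S): lc (a,b-1) → (a,b-1)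
    rw [leftCell_west rfl, leftCell_south (show b = (b-1)+1 by ring)]
    exact Rel.refl' L F hbox0m
  -- arrival E (u = (a-1,b))
  · -- dep E: straight east: (a-1,b) → (a,b)
    have heuv : s(((a-1:ℤ), b), ((a:ℤ), b)) = hE (a-1) b := hE_eq (by ring)
    have hevt : s(((a:ℤ), b), ((a+1:ℤ), b)) = hE a b := hE_eq rfl
    rw [leftCell_east (show a = (a-1)+1 by ring), leftCell_east rfl]
    have hn : vE a b ∉ F := by
      intro hm
      rcases honly _ hm hmvab with he | he
      · rw [heuv] at he; exact vE_ne_hE he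
      · rw [hevt] at he; exact vE_ne_hE he
    exact rel_adj_h L F (show a = (a-1)+1 by ring) (by omega) hboxm0 hbox00 hn
  · -- dep W: reversal
    have heuv : s(((a-1:ℤ), b), ((a:ℤ), b)) = hE (a-1) b := hE_eq (by ring)
    have hevt : s(((a:ℤ), b), ((a-1:ℤ), b)) = hE (a-1) b := hE_eq' (by ring)
    exact absurd (heuv.trans hevt.symm) hne
  · -- dep N: left turn: (a-1,b) → (a-1,b)
    rw [leftCell_east (show a = (a-1)+1 by ring), leftCell_north rfl]
    exact Rel.refl' L F hboxm0
  · -- dep S: right turn (arr E, dep S): (a-1,b) → (a,b-1), corner (a,b)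
    have heuv : s(((a-1:ℤ), b), ((a:ℤ), b)) = hE (a-1) b := hE_eq (by ring)
    have hevt : s(((a:ℤ), b), ((a:ℤ), b-1)) = vE a (b-1) := vE_eq' (by ring)
    rw [leftCell_east (show a = (a-1)+1 by ring), leftCell_south (show b = (b-1)+1 by ring)]
    have hn1 : vE a b ∉ F := by
      intro hm
      rcases honly _ hm hmvab with he | he
      · rw [heuv] at he; exact vE_ne_hE he
      · rw [hevt] at he; have := vE_inj he; omega
    have hn2 : hE a b ∉ F := by
      intro hm
      rcases honly _ hm hmhab with he | he
      · rw [heuv] at he; have := hE_inj he; omega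
      · rw [hevt] at he; exact vE_ne_hE he.symm
    refine Rel.trans' L F (rel_adj_h L F (show a = (a-1)+1 by ring) (by omega) hboxm0 hbox00
      hn1) ?_
    exact Rel.symm' L F (rel_adj_v L F hF (show b = (b-1)+1 by ring) (by omega) hbox0m hbox00
      hn2)
  -- arrival S (u = (a,b+1))
  · -- dep E: left turn: (a,b) → (a,b)
    rw [leftCell_south rfl, leftCell_east rfl]
    exact Rel.refl' L F hbox00
  · -- dep W: right turn (arr S, dep W): (a,b) → (a-1,b-1), corner (a,b-1)
    have heuv : s(((a:ℤ), b+1), ((a:ℤ), b)) = vE a b := vE_eq' rfl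
    have hevt : s(((a:ℤ), b), ((a-1:ℤ), b)) = hE (a-1) b := hE_eq' (by ring)
    rw [leftCell_south rfl, leftCell_west (show a = (a-1)+1 by ring)]
    have hn1 : hE a b ∉ F := by
      intro hm
      rcases honly _ hm hmhab with he | he
      · rw [heuv] at he; exact vE_ne_hE he.symm
      · rw [hevt] at he; have := hE_inj he; omega
    have hn2 : vE a (b-1) ∉ F := by
      intro hm
      rcases honly _ hm hmvabm with he | he
      · rw [heuv] at he; have := vE_inj he; omega
      · rw [hevt] at he; exact vE_ne_hE he
    refine Rel.trans' L F (Rel.symm' L F (rel_adj_v L F hF (show b = (b-1)+1 by ring) (by omega)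
      hbox0m hbox00 hn1)) ?_
    exact Rel.symm' L F (rel_adj_h L F (show a = (a-1)+1 by ring) (by omega) hboxmm hbox0m
      hn2)
  · -- dep N: reversal
    have heuv : s(((a:ℤ), b+1), ((a:ℤ), b)) = vE a b := vE_eq' rfl
    have hevt : s(((a:ℤ), b), ((a:ℤ), b+1)) = vE a b := vE_eq rfl
    exact absurd (heuv.trans hevt.symm) hne
  · -- dep S: straight south: (a,b) → (a,b-1)
    have heuv : s(((a:ℤ), b+1), ((a:ℤ), b)) = vE a b := vE_eq' rfl
    have hevt : s(((a:ℤ), b), ((a:ℤ), b-1)) = vE a (b-1) := vE_eq' (by ring)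
    rw [leftCell_south rfl, leftCell_south (show b = (b-1)+1 by ring)]
    have hn : hE a b ∉ F := by
      intro hm
      rcases honly _ hm hmhab with he | he
      · rw [heuv] at he; exact vE_ne_hE he.symm
      · rw [hevt] at he; exact vE_ne_hE he.symm
    exact Rel.symm' L F (rel_adj_v L F hF (show b = (b-1)+1 by ring) (by omega) hbox0m hbox00
      hn)
  -- arrival N (u = (a,b-1))
  · -- dep E: right turn (arr N, dep E): (a-1,b-1) → (a,b), corner (a-1,b)
    have heuv : s(((a:ℤ), b-1), ((a:ℤ), b)) = vE a (b-1) := vE_eq (by ring)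
    have hevt : s(((a:ℤ), b), ((a+1:ℤ), b)) = hE a b := hE_eq rfl
    rw [leftCell_north (show b = (b-1)+1 by ring), leftCell_east rfl]
    have hn1 : hE (a-1) b ∉ F := by
      intro hm
      rcases honly _ hm hmham with he | he
      · rw [heuv] at he; exact vE_ne_hE he.symm
      · rw [hevt] at he; have := hE_inj he; omega
    have hn2 : vE a b ∉ F := by
      intro hm
      rcases honly _ hm hmvab with he | he
      · rw [heuv] at he; have := vE_inj he; omega
      · rw [hevt] at he; exact vE_ne_hE he
    refine Rel.trans' L F (rel_adj_v L F hF (show b = (b-1)+1 by ring) (by omega) hboxmm hboxm0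
      hn1) ?_
    exact rel_adj_h L F (show a = (a-1)+1 by ring) (by omega) hboxm0 hbox00 hn2
  · -- dep W: left turn: (a-1,b-1) → (a-1,b-1)
    rw [leftCell_north (show b = (b-1)+1 by ring), leftCell_west (show a = (a-1)+1 by ring)]
    exact Rel.refl' L F hboxmm
  · -- dep N: straight north: (a-1,b-1) → (a-1,b)
    have heuv : s(((a:ℤ), b-1), ((a:ℤ), b)) = vE a (b-1) := vE_eq (by ring)
    have hevt : s(((a:ℤ), b), ((a:ℤ), b+1)) = vE a b := vE_eq rfl
    rw [leftCell_north (show b = (b-1)+1 by ring), leftCell_north rfl]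
    have hn : hE (a-1) b ∉ F := by
      intro hm
      rcases honly _ hm hmham with he | he
      · rw [heuv] at he; exact vE_ne_hE he.symm
      · rw [hevt] at he; exact vE_ne_hE he.symm
    exact rel_adj_v L F hF (show b = (b-1)+1 by ring) (by omega) hboxmm hboxm0 hn
  · -- dep S: reversal
    have heuv : s(((a:ℤ), b-1), ((a:ℤ), b)) = vE a (b-1) := vE_eq (by ring)
    have hevt : s(((a:ℤ), b), ((a:ℤ), b-1)) = vE a (b-1) := vE_eq' (by ring)
    exact absurd (heuv.trans hevt.symm) hne

end SAP
namespace SAP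
open SimpleGraph

variable (L : ℤ) (F : Finset (Sym2 (ℤ × ℤ)))

lemma leftCell_mem_box {u v : ℤ × ℤ} (hadj : latticeGraph.Adj u v)
    (hu : u ∈ inner L) (hv : v ∈ inner L) : leftCell u v ∈ box L := by
  obtain ⟨a, b⟩ := v
  obtain ⟨ha1, ha2, hb1, hb2⟩ := hv
  have Ha1 : 1 ≤ a := ha1
  have Ha2 : a ≤ L - 1 := ha2
  have Hb1 : 1 ≤ b := hb1
  have Hb2 : b ≤ L - 1 := hb2
  rcases neighbor_cases hadj with rfl | rfl | rfl | rfl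
  · rw [leftCell_west rfl]
    exact ⟨show (0:ℤ) ≤ a by omega, show a < L by omega,
      show (0:ℤ) ≤ b - 1 by omega, show b - 1 < L by omega⟩
  · rw [leftCell_east (show a = (a-1)+1 by ring)]
    exact ⟨show (0:ℤ) ≤ a - 1 by omega, show a - 1 < L by omega,
      show (0:ℤ) ≤ b by omega, show b < L by omega⟩
  · rw [leftCell_south rfl]
    exact ⟨show (0:ℤ) ≤ a by omega, show a < L by omega,
      show (0:ℤ) ≤ b by omega, show b < L by omega⟩
  · rw [leftCell_north (show b = (b-1)+1 by ring)]
    exact ⟨show (0:ℤ) ≤ a - 1 by omega, show a - 1 < L by omega,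
      show (0:ℤ) ≤ b - 1 by omega, show b - 1 < L by omega⟩

/-- the step lemma for right cells -/
lemma step_right (hF : Good L F) {u v t : ℤ × ℤ}
    (huv : latticeGraph.Adj u v) (hvt : latticeGraph.Adj v t)
    (h1 : s(u, v) ∈ F) (h2 : s(v, t) ∈ F) (hne : s(u, v) ≠ s(v, t))
    (honly : ∀ e ∈ F, v ∈ e → e = s(u, v) ∨ e = s(v, t))
    (hv : v ∈ inner L) :
    Rel L F (leftCell v u) (leftCell t v) := by
  have h1' : s(v, u) ∈ F := by rwa [Sym2.eq_swap] at h1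
  have h2' : s(t, v) ∈ F := by rwa [Sym2.eq_swap] at h2
  have hne' : s(t, v) ≠ s(v, u) := by
    rw [Sym2.eq_swap, show s(v,u) = s(u,v) from Sym2.eq_swap]
    exact hne.symm
  have honly' : ∀ e ∈ F, v ∈ e → e = s(t, v) ∨ e = s(v, u) := by
    intro e he hve
    rcases honly e he hve with h | h
    · right; rw [h, Sym2.eq_swap]
    · left; rw [h, Sym2.eq_swap]
  exact Rel.symm' L F (step L F hF hvt.symm huv.symm h2' h1' hne' honly' hv)

/-- chain lemma: all left cells along a trail are in the same chi-class component. -/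
lemma chain_aux (hF : Good L F)
    (honly2 : ∀ (x : ℤ × ℤ) (e1 e2 e : Sym2 (ℤ × ℤ)), e1 ∈ F → e2 ∈ F → e ∈ F → e1 ≠ e2 →
      x ∈ e1 → x ∈ e2 → x ∈ e → e = e1 ∨ e = e2)
    (side : Bool) :
    ∀ {v b : ℤ × ℤ} (p : latticeGraph.Walk v b) {u : ℤ × ℤ} (h : latticeGraph.Adj u v),
      (Walk.cons h p).IsTrail →
      (∀ e ∈ (Walk.cons h p).edges, e ∈ F) →
      (∀ x ∈ (Walk.cons h p).support, x ∈ inner L) →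
      ∀ d ∈ (Walk.cons h p).darts,
        Rel L F (if side then leftCell u v else leftCell v u)
          (if side then leftCell d.fst d.snd else leftCell d.snd d.fst) := by
  intro v b p
  induction p with
  | nil =>
      intro u h htrail hsub hsupp d hd
      rw [Walk.darts_cons, Walk.darts_nil, List.mem_singleton] at hd
      subst hd
      have hu : u ∈ inner L := hsupp u (Walk.start_mem_support _)
      cases side
      · exact Rel.refl' L F (leftCell_mem_box L h.symm (hsupp _ (by simp)) hu)
      · exact Rel.refl' L F (leftCell_mem_box L h hu (hsupp _ (by simp)))
  | @cons v' c b' hadj q ih =>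
      intro u h htrail hsub hsupp d hd
      rw [Walk.darts_cons, List.mem_cons] at hd
      have hu : u ∈ inner L := hsupp u (Walk.start_mem_support _)
      have hv : v' ∈ inner L := by
        apply hsupp
        rw [Walk.support_cons]
        exact List.mem_cons_of_mem _ (Walk.start_mem_support _)
      rcases hd with rfl | hd
      · cases side
        · exact Rel.refl' L F (leftCell_mem_box L h.symm hv hu)
        · exact Rel.refl' L F (leftCell_mem_box L h hu hv)
      · -- step + ih
        have h1 : s(u, v') ∈ F := by
          apply hsub
          rw [Walk.edges_cons]
          exact List.mem_cons_self
        have h2 : s(v', c) ∈ F := by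
          apply hsub
          rw [Walk.edges_cons, Walk.edges_cons]
          exact List.mem_cons_of_mem _ List.mem_cons_self
        have hne : s(u, v') ≠ s(v', c) := by
          have hnodup := htrail.edges_nodup
          rw [Walk.edges_cons, Walk.edges_cons, List.nodup_cons] at hnodup
          intro hcon
          exact hnodup.1 (hcon ▸ List.mem_cons_self)
        have honly : ∀ e ∈ F, v' ∈ e → e = s(u, v') ∨ e = s(v', c) := by
          intro e he hve
          exact honly2 v' _ _ e h1 h2 he hne (Sym2.mem_mk_right u v') (Sym2.mem_mk_left v' c) hve
        have hstep : Rel L F (if side then leftCell u v' else leftCell v' u)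
            (if side then leftCell v' c else leftCell c v') := by
          cases side
          · simpa using step_right L F hF h hadj h1 h2 hne honly hv
          · simpa using step L F hF h hadj h1 h2 hne honly hv
        refine Rel.trans' L F hstep ?_
        apply ih hadj htrail.of_cons
        · intro e he
          apply hsub
          rw [Walk.edges_cons]
          exact List.mem_cons_of_mem _ he
        · intro x hx
          apply hsupp
          rw [Walk.support_cons]
          exact List.mem_cons_of_mem _ hx
        · exact hd

end SAP
namespace SAP
open SimpleGraph

variable (L : ℤ) (F : Finset (Sym2 (ℤ × ℤ)))

/-- across an edge of `F`, the two side cells have different parity -/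
lemma edge_flip (hF : Good L F) {u v : ℤ × ℤ} (hadj : latticeGraph.Adj u v)
    (hv : v ∈ inner L) (he : s(u, v) ∈ F) :
    chi F (leftCell u v) ≠ chi F (leftCell v u) := by
  obtain ⟨a, b⟩ := v
  obtain ⟨ha1, ha2, hb1, hb2⟩ := hv
  have Ha1 : 1 ≤ a := ha1
  have Hb1 : 1 ≤ b := hb1
  rcases neighbor_cases hadj with rfl | rfl | rfl | rfl
  · -- u = (a+1,b), edge hE a b, cells (a,b-1) lower / (a,b) upper
    have hee : s(((a+1:ℤ), b), ((a:ℤ), b)) = hE a b := hE_eq' rfl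
    rw [hee] at he
    rw [leftCell_west rfl, leftCell_east rfl]
    have := (chi_ne_v L F hF a (b-1) (by omega)).mpr (by rwa [show b - 1 + 1 = b by ring])
    rw [show (b - 1 + 1 : ℤ) = b by ring] at this
    exact this
  · -- u = (a-1,b), edge hE (a-1) b, cells (a-1,b) / (a-1,b-1)
    have hee : s(((a-1:ℤ), b), ((a:ℤ), b)) = hE (a-1) b := hE_eq (by ring)
    rw [hee] at he
    rw [leftCell_east (show a = (a-1)+1 by ring), leftCell_west (show a = (a-1)+1 by ring)]
    have := (chi_ne_v L F hF (a-1) (b-1) (by omega)).mpr (by rwa [show b - 1 + 1 = b by ring])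
    rw [show (b - 1 + 1 : ℤ) = b by ring] at this
    exact this.symm
  · -- u = (a,b+1), edge vE a b, cells (a,b) / (a-1,b)
    have hee : s(((a:ℤ), b+1), ((a:ℤ), b)) = vE a b := vE_eq' rfl
    rw [hee] at he
    rw [leftCell_south rfl, leftCell_north rfl]
    have := (chi_ne_h F (a-1) b (by omega)).mpr (by rwa [show a - 1 + 1 = a by ring])
    rw [show (a - 1 + 1 : ℤ) = a by ring] at this
    exact this.symm
  · -- u = (a,b-1), edge vE a (b-1), cells (a-1,b-1) / (a,b-1)
    have hee : s(((a:ℤ), b-1), ((a:ℤ), b)) = vE a (b-1) := vE_eq (by ring)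
    rw [hee] at he
    rw [leftCell_north (show b = (b-1)+1 by ring), leftCell_south (show b = (b-1)+1 by ring)]
    have := (chi_ne_h F (a-1) (b-1) (by omega)).mpr (by rwa [show a - 1 + 1 = a by ring])
    rw [show (a - 1 + 1 : ℤ) = a by ring] at this
    exact this

end SAP
namespace SAP
open SimpleGraph

variable (L : ℤ) (F : Finset (Sym2 (ℤ × ℤ)))

lemma sameComp_congr {A B : Set (ℤ × ℤ)} (h : A = B) {c c' : ℤ × ℤ}
    (hs : SameComp A c c') : SameComp B c c' := h ▸ hs

lemma climb_aux (hF : Good L F) : ∀ n : ℕ, ∀ x y : ℤ, (x, y) ∈ box L → L - 1 - y ≤ n →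
    ∃ y', y ≤ y' ∧ (x, y') ∈ box L ∧
      SameComp {m | m ∈ box L ∧ chi F m = chi F (x, y)} (x, y) (x, y') ∧
      chi F (x, y') = chi F (x, y) ∧
      (y' = L - 1 ∨ (y' + 1 ≤ L - 1 ∧ chi F (x, y' + 1) ≠ chi F (x, y))) := by
  intro n
  induction n with
  | zero =>
      intro x y hbox hle
      obtain ⟨h1, h2, h3, h4⟩ := hbox
      refine ⟨y, le_rfl, ⟨h1, h2, h3, h4⟩, SameComp.rfl ⟨⟨h1, h2, h3, h4⟩, rfl⟩, rfl,
        Or.inl ?_⟩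
      have H3 : (0:ℤ) ≤ (x, y).2 := h3
      have H4 : (x, y).2 < L := h4
      simp only at H3 H4
      omega
  | succ n ih =>
      intro x y hbox hle
      obtain ⟨h1, h2, h3, h4⟩ := hbox
      have H1 : (0:ℤ) ≤ x := h1
      have H2 : x < L := h2
      have H3 : (0:ℤ) ≤ y := h3
      have H4 : y < L := h4
      by_cases hy : L - 1 ≤ y
      · exact ⟨y, le_rfl, ⟨h1, h2, h3, h4⟩, SameComp.rfl ⟨⟨h1, h2, h3, h4⟩, rfl⟩, rfl,
          Or.inl (by omega)⟩
      · have hbox' : ((x, y + 1) : ℤ × ℤ) ∈ box L :=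
          ⟨show (0:ℤ) ≤ x from H1, show x < L from H2,
           show (0:ℤ) ≤ y + 1 by omega, show y + 1 < L by omega⟩
        by_cases hch : chi F (x, y + 1) = chi F (x, y)
        · obtain ⟨y', hy1, hy2, hy3, hy4, hy5⟩ := ih x (y + 1) hbox' (by omega)
          have hset : {m | m ∈ box L ∧ chi F m = chi F (x, y + 1)}
              = {m | m ∈ box L ∧ chi F m = chi F (x, y)} := by rw [hch]
          refine ⟨y', by omega, hy2, ?_, hy4.trans hch, ?_⟩
          · refine SameComp.trans ?_ (sameComp_congr hset hy3)
            exact SameComp.adj ⟨⟨h1, h2, h3, h4⟩, rfl⟩ ⟨hbox', hch⟩ (adj_up x y)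
          · rcases hy5 with h | ⟨ha, hb⟩
            · exact Or.inl h
            · exact Or.inr ⟨ha, fun hcon => hb (hcon.trans hch.symm)⟩
        · exact ⟨y, le_rfl, ⟨h1, h2, h3, h4⟩, SameComp.rfl ⟨⟨h1, h2, h3, h4⟩, rfl⟩, rfl,
            Or.inr ⟨by omega, hch⟩⟩

lemma climb (hF : Good L F) {x y : ℤ} (hbox : (x, y) ∈ box L) :
    ∃ y', y ≤ y' ∧ (x, y') ∈ box L ∧
      SameComp {m | m ∈ box L ∧ chi F m = chi F (x, y)} (x, y) (x, y') ∧
      chi F (x, y') = chi F (x, y) ∧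
      (y' = L - 1 ∨ (y' + 1 ≤ L - 1 ∧ chi F (x, y' + 1) ≠ chi F (x, y))) := by
  have H4 : (x, y).2 < L := hbox.2.2.2
  simp only at H4
  exact climb_aux L F hF (L - 1 - y).toNat x y hbox (by omega)

/-- the top row is all in the same exterior component -/
lemma toprow (hF : Good L F) (hL : 3 ≤ L) : ∀ n : ℕ, ∀ x : ℤ, 0 ≤ x → x + n ≤ L - 1 →
    SameComp {m | m ∈ box L ∧ chi F m = 0} (x, L - 1) (x + n, L - 1) := by
  intro n
  induction n with
  | zero =>
      intro x hx hxn
      have hmem : ((x, L - 1) : ℤ × ℤ) ∈ {m : ℤ × ℤ | m ∈ box L ∧ chi F m = 0} :=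
        ⟨⟨show (0:ℤ) ≤ x from hx, show x < L by omega,
          show (0:ℤ) ≤ L - 1 by omega, show L - 1 < L by omega⟩, chi_top L F hF (by omega)⟩
      simpa using SameComp.rfl hmem
  | succ n ih =>
      intro x hx hxn
      push_cast at hxn ⊢
      have h1 := ih (x + 1) (by omega) (by omega)
      have hstep : SameComp {m | m ∈ box L ∧ chi F m = 0} (x, L - 1) (x + 1, L - 1) := by
        refine SameComp.adj ⟨⟨show (0:ℤ) ≤ x from hx, show x < L by omega,
          show (0:ℤ) ≤ L - 1 by omega, show L - 1 < L by omega⟩, chi_top L F hF (by omega)⟩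
          ⟨⟨show (0:ℤ) ≤ x + 1 by omega, show x + 1 < L by omega,
            show (0:ℤ) ≤ L - 1 by omega, show L - 1 < L by omega⟩, chi_top L F hF (by omega)⟩
          (adj_right x (L - 1))
      have := hstep.trans h1
      rwa [show x + 1 + (n:ℤ) = x + (n + 1) by ring] at this

end SAP
namespace SAP
open SimpleGraph

lemma exists_edge_incident {V : Type*} {G : SimpleGraph V} {aa bb : V} (p : G.Walk aa bb) :
    ¬p.Nil → ∀ x ∈ p.support, ∃ e ∈ p.edges, x ∈ e := by
  induction p with
  | nil => intro hnil; simp at hnil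
  | @cons a c bb h q ih =>
      intro _ x hx
      rw [Walk.support_cons, List.mem_cons] at hx
      rcases hx with rfl | hx
      · exact ⟨s(x, c), by simp, Sym2.mem_mk_left _ _⟩
      · by_cases hq : q.Nil
        · have hxc : x = c := by
            cases q with
            | nil => simpa using hx
            | cons h' q' => simp at hq
          subst hxc
          exact ⟨s(a, x), by simp, Sym2.mem_mk_right _ _⟩
        · obtain ⟨e, he, hxe⟩ := ih hq x hx
          exact ⟨e, by simp [he], hxe⟩

/-- the cell on one side of a dart -/
def cellOf : Bool → latticeGraph.Dart → ℤ × ℤ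
  | true, d => leftCell d.fst d.snd
  | false, d => leftCell d.snd d.fst

section Cyc

variable (L : ℤ) {v0 : ℤ × ℤ} (w : latticeGraph.Walk v0 v0)

lemma cycle_good (hw : w.IsCycle) (hsupp : ∀ x ∈ w.support, x ∈ inner L) :
    Good L w.edges.toFinset := by
  constructor
  · intro e he
    rw [List.mem_toFinset] at he
    induction e using Sym2.ind with
    | _ u v =>
        have hadj : latticeGraph.Adj u v :=
          (SimpleGraph.mem_edgeSet _).mp (w.edges_subset_edgeSet he)
        exact ⟨u, v, hadj, hsupp u (w.fst_mem_support_of_mem_edges he),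
          hsupp v (w.snd_mem_support_of_mem_edges he), rfl⟩
  · intro x
    exact cycle_even_deg w hw x

lemma dart_edge_mem' {d : latticeGraph.Dart} (hd : d ∈ w.darts) :
    s(d.fst, d.snd) ∈ w.edges.toFinset := by
  rw [List.mem_toFinset]
  have h : s(d.fst, d.snd) = d.edge := rfl
  rw [h]
  exact List.mem_map_of_mem hd

lemma dart_of_edge {e : Sym2 (ℤ × ℤ)} (he : e ∈ w.edges.toFinset) :
    ∃ d ∈ w.darts, d.edge = e := by
  rw [List.mem_toFinset] at he
  have h : w.edges = w.darts.map SimpleGraph.Dart.edge := rfl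
  rw [h, List.mem_map] at he
  exact he

lemma cycle_rel (hw : w.IsCycle) (hsupp : ∀ x ∈ w.support, x ∈ inner L) (side : Bool) :
    ∀ d ∈ w.darts, ∀ d' ∈ w.darts,
      Rel L w.edges.toFinset (cellOf side d) (cellOf side d') := by
  have hF := cycle_good L w hw hsupp
  have honly2 : ∀ (x : ℤ × ℤ) (e1 e2 e : Sym2 (ℤ × ℤ)), e1 ∈ w.edges.toFinset →
      e2 ∈ w.edges.toFinset → e ∈ w.edges.toFinset → e1 ≠ e2 →
      x ∈ e1 → x ∈ e2 → x ∈ e → e = e1 ∨ e = e2 :=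
    fun x e1 e2 e he1 he2 he hne hx1 hx2 hx =>
      cycle_only_two w hw hne he1 he2 he hx1 hx2 hx
  cases w with
  | nil => exact absurd hw Walk.IsCycle.not_of_nil
  | cons h p =>
      intro d hd d' hd'
      have htrail := hw.isCircuit.isTrail
      have hsub : ∀ e ∈ (Walk.cons h p).edges, e ∈ (Walk.cons h p).edges.toFinset :=
        fun e he => List.mem_toFinset.mpr he
      have haux := chain_aux L _ hF honly2 side p h htrail hsub hsupp
      have h1 := haux d hd
      have h2 := haux d' hd'
      cases side
      · exact Rel.trans' L _ (Rel.symm' L _ h1) h2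
      · exact Rel.trans' L _ (Rel.symm' L _ h1) h2

lemma cycle_sides_ne (hw : w.IsCycle) (hsupp : ∀ x ∈ w.support, x ∈ inner L)
    {d : latticeGraph.Dart} (hd : d ∈ w.darts) :
    chi w.edges.toFinset (cellOf true d) ≠ chi w.edges.toFinset (cellOf false d) := by
  have hF := cycle_good L w hw hsupp
  have hv : d.snd ∈ inner L := hsupp d.snd (w.dart_snd_mem_support_of_mem_darts hd)
  exact edge_flip L _ hF d.adj hv (dart_edge_mem' w hd)

lemma cycle_rel_chi (hw : w.IsCycle) (hsupp : ∀ x ∈ w.support, x ∈ inner L)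
    {d d' : latticeGraph.Dart} (hd : d ∈ w.darts) (hd' : d' ∈ w.darts) (s s' : Bool)
    (hchi : chi w.edges.toFinset (cellOf s d) = chi w.edges.toFinset (cellOf s' d')) :
    Rel L w.edges.toFinset (cellOf s d) (cellOf s' d') := by
  by_cases hss : s = s'
  · subst hss
    exact cycle_rel L w hw hsupp s d hd d' hd'
  · exfalso
    have h1 := (cycle_rel L w hw hsupp s d hd d' hd').1
    have hne' := cycle_sides_ne L w hw hsupp hd'
    cases s <;> cases s'
    · exact hss rfl
    · exact hne' ((h1.symm.trans hchi).symm)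
    · exact hne' (h1.symm.trans hchi)
    · exact hss rfl

lemma exists_dart (hw : w.IsCycle) : ∃ d, d ∈ w.darts := by
  have h3 := hw.three_le_length
  have hlen := w.length_darts
  apply List.exists_mem_of_ne_nil
  intro hcon
  rw [hcon] at hlen
  simp at hlen
  omega

/-- a side cell of a dart for a horizontal edge -/
lemma cellOf_of_hE {d : latticeGraph.Dart} {x b : ℤ} (hd : d.edge = hE x b) :
    (cellOf true d = (x, b) ∧ cellOf false d = (x, b - 1)) ∨
    (cellOf true d = (x, b - 1) ∧ cellOf false d = (x, b)) := by
  have hd' : s(d.fst, d.snd) = s(((x:ℤ), b), (x + 1, b)) := hd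
  rw [Sym2.eq_iff] at hd'
  rcases hd' with ⟨h1, h2⟩ | ⟨h1, h2⟩
  · left
    constructor
    · show leftCell d.fst d.snd = (x, b)
      rw [h1, h2, leftCell_east rfl]
    · show leftCell d.snd d.fst = (x, b - 1)
      rw [h1, h2, leftCell_west rfl]
  · right
    constructor
    · show leftCell d.fst d.snd = (x, b - 1)
      rw [h1, h2, leftCell_west rfl]
    · show leftCell d.snd d.fst = (x, b)
      rw [h1, h2, leftCell_east rfl]

/-- there is a topmost horizontal edge -/
lemma top_edge (hw : w.IsCycle) (hsupp : ∀ x ∈ w.support, x ∈ inner L) :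
    ∃ x b : ℤ, hE x b ∈ w.edges.toFinset ∧ (∀ u ∈ w.support, u.2 ≤ b) := by
  classical
  obtain ⟨vst, hvstS, hblep⟩ : ∃ v' ∈ w.support, ∀ u ∈ w.support, u.2 ≤ v'.2 := by
    have hne : (w.support.toFinset.image Prod.snd).Nonempty :=
      ⟨v0.2, Finset.mem_image_of_mem _ (List.mem_toFinset.mpr (w.start_mem_support))⟩
    have hmax := Finset.max'_mem _ hne
    rw [Finset.mem_image] at hmax
    obtain ⟨v', hv', h2⟩ := hmax
    refine ⟨v', List.mem_toFinset.mp hv', fun u hu => ?_⟩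
    rw [h2]
    exact Finset.le_max' _ _ (Finset.mem_image_of_mem _ (List.mem_toFinset.mpr hu))
  obtain ⟨va, vb⟩ := vst
  have hble : ∀ u ∈ w.support, u.2 ≤ vb := hblep
  -- two distinct incident edges
  obtain ⟨e0, he0, hve0⟩ := exists_edge_incident w hw.not_nil (va, vb) hvstS
  have heven := cycle_even_deg w hw ((va, vb) : ℤ × ℤ)
  have hposmem : e0 ∈ w.edges.toFinset.filter (fun e => ((va, vb) : ℤ × ℤ) ∈ e) :=
    Finset.mem_filter.mpr ⟨List.mem_toFinset.mpr he0, hve0⟩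
  have hcard2 : 1 < (w.edges.toFinset.filter (fun e => ((va, vb) : ℤ × ℤ) ∈ e)).card := by
    obtain ⟨k, hk⟩ := heven
    have hpos := Finset.card_pos.mpr ⟨e0, hposmem⟩
    omega
  obtain ⟨e1, he1, e2, he2, hne12⟩ := Finset.one_lt_card.mp hcard2
  rw [Finset.mem_filter] at he1 he2
  -- get the neighbours
  obtain ⟨n1, hn1⟩ := Sym2.mem_iff_exists.mp he1.2
  obtain ⟨n2, hn2⟩ := Sym2.mem_iff_exists.mp he2.2
  have hmem1 : s((va, vb), n1) ∈ w.edges := by rw [← hn1]; exact List.mem_toFinset.mp he1.1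
  have hmem2 : s((va, vb), n2) ∈ w.edges := by rw [← hn2]; exact List.mem_toFinset.mp he2.1
  have hadj1 : latticeGraph.Adj (va, vb) n1 :=
    (SimpleGraph.mem_edgeSet _).mp (w.edges_subset_edgeSet hmem1)
  have hadj2 : latticeGraph.Adj (va, vb) n2 :=
    (SimpleGraph.mem_edgeSet _).mp (w.edges_subset_edgeSet hmem2)
  have hs1 : n1 ∈ w.support := w.snd_mem_support_of_mem_edges hmem1
  have hs2 : n2 ∈ w.support := w.snd_mem_support_of_mem_edges hmem2
  have hnn : n1 ≠ n2 := by
    intro hcon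
    apply hne12
    rw [hn1, hn2, hcon]
  have hhor : ∀ n : ℤ × ℤ, latticeGraph.Adj (va, vb) n → n ∈ w.support →
      s((va, vb), n) ∈ w.edges → n ≠ (va, vb - 1) →
      ∃ x : ℤ, hE x vb = s(((va : ℤ), vb), n) := by
    intro n hadj hns hmem hnd
    rcases neighbor_cases hadj.symm with rfl | rfl | rfl | rfl
    · exact ⟨va, (hE_eq rfl).symm⟩
    · exact ⟨va - 1, (hE_eq' (by ring)).symm⟩
    · exfalso
      have := hble _ hns
      have h2 : ((va, vb + 1) : ℤ × ℤ).2 = vb + 1 := rfl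
      omega
    · exact absurd rfl hnd
  by_cases hd1 : n1 = (va, vb - 1)
  · have hd2 : n2 ≠ (va, vb - 1) := fun hcon => hnn (hd1.trans hcon.symm)
    obtain ⟨x, hx⟩ := hhor n2 hadj2 hs2 hmem2 hd2
    exact ⟨x, vb, by rw [hx]; exact List.mem_toFinset.mpr hmem2, hble⟩
  · obtain ⟨x, hx⟩ := hhor n1 hadj1 hs1 hmem1 hd1
    exact ⟨x, vb, by rw [hx]; exact List.mem_toFinset.mpr hmem1, hble⟩

end Cyc
end SAP
namespace SAP
open SimpleGraph

def intSet (L : ℤ) (F : Finset (Sym2 (ℤ × ℤ))) : Set (ℤ × ℤ) :=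
  {m | m ∈ box L ∧ chi F m = 1}

def extSet (L : ℤ) (F : Finset (Sym2 (ℤ × ℤ))) : Set (ℤ × ℤ) :=
  {m | m ∈ box L ∧ chi F m = 0}

lemma ext_eq_diff (L : ℤ) (F : Finset (Sym2 (ℤ × ℤ))) :
    extSet L F = box L \ intSet L F := by
  ext p
  constructor
  · rintro ⟨hb, h0⟩
    refine ⟨hb, fun hc => ?_⟩
    have h1 := hc.2
    rw [h0] at h1
    exact absurd h1 (by decide)
  · rintro ⟨hb, hn⟩
    rcases zmod2_cases (chi F p) with h | h
    · exact ⟨hb, h⟩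
    · exact absurd ⟨hb, h⟩ hn

lemma sameComp_reachable {A : Set (ℤ × ℤ)} {c c' : ℤ × ℤ} (h : SameComp A c c')
    (hc : c ∈ A) (hc' : c' ∈ A) :
    (latticeGraph.induce A).Reachable ⟨c, hc⟩ ⟨c', hc'⟩ := by
  obtain ⟨h1, h2, hr⟩ := h
  exact hr

section Cyc2
variable (L : ℤ) {v0 : ℤ × ℤ} (w : latticeGraph.Walk v0 v0)

lemma cellOf_mem_box (hsupp : ∀ x ∈ w.support, x ∈ inner L) {d : latticeGraph.Dart}
    (hd : d ∈ w.darts) (s : Bool) : cellOf s d ∈ box L := by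
  have h1 := hsupp d.fst (w.dart_fst_mem_support_of_mem_darts hd)
  have h2 := hsupp d.snd (w.dart_snd_mem_support_of_mem_darts hd)
  cases s
  · exact leftCell_mem_box L d.adj.symm h2 h1
  · exact leftCell_mem_box L d.adj h1 h2

lemma ext_anchor (hL : 3 ≤ L) (hw : w.IsCycle) (hsupp : ∀ x ∈ w.support, x ∈ inner L) :
    ∃ d ∈ w.darts, ∃ s : Bool, chi w.edges.toFinset (cellOf s d) = 0 ∧
      SameComp (extSet L w.edges.toFinset) (cellOf s d) ((0 : ℤ), L - 1) := by
  set F := w.edges.toFinset with hFdef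
  have hF : Good L F := cycle_good L w hw hsupp
  obtain ⟨x, b, heF, hble⟩ := top_edge L w hw hsupp
  obtain ⟨hx1, hx2, hb1, hb2⟩ := hF.hE_bounds L F heF
  have hbox : ((x, b) : ℤ × ℤ) ∈ box L :=
    ⟨show (0:ℤ) ≤ x by omega, show x < L by omega, show (0:ℤ) ≤ b by omega, show b < L by omega⟩
  obtain ⟨y', hy1, hy2, hy3, hy4, hy5⟩ := climb L F hF hbox
  rcases hy5 with htop | ⟨hle, hnech⟩
  · -- reached the top
    subst htop
    have hchib : chi F (x, b) = 0 := by
      rw [← hy4]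
      exact chi_top L F hF (by omega)
    have hclass : {m | m ∈ box L ∧ chi F m = chi F (x, b)} = extSet L F := by
      rw [hchib]; rfl
    have hup : SameComp (extSet L F) (x, b) (x, L - 1) := sameComp_congr (by rw [hclass]) hy3
    have ht := toprow L F hF hL x.toNat 0 le_rfl (by omega)
    rw [show ((0:ℤ) + (x.toNat : ℤ)) = x by omega] at ht
    have htotal : SameComp (extSet L F) (x, b) ((0:ℤ), L - 1) :=
      hup.trans (SameComp.symm ht)
    obtain ⟨d, hd, hedge⟩ := dart_of_edge w heF
    rcases cellOf_of_hE hedge with ⟨hA, _⟩ | ⟨_, hA⟩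
    · exact ⟨d, hd, true, by rw [hA]; exact hchib, by rw [hA]; exact htotal⟩
    · exact ⟨d, hd, false, by rw [hA]; exact hchib, by rw [hA]; exact htotal⟩
  · -- flip case is impossible above the topmost vertex
    exfalso
    have hne' : chi F (x, y') ≠ chi F (x, y' + 1) := by
      rw [hy4]
      exact fun hc => hnech (hc.symm)
    have hEmem : hE x (y' + 1) ∈ F := (chi_ne_v L F hF x y' (by omega)).mp hne'
    have hmem : s(((x:ℤ), y' + 1), ((x+1:ℤ), y' + 1)) ∈ w.edges := by
      have : hE x (y' + 1) ∈ w.edges := List.mem_toFinset.mp hEmem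
      exact this
    have hsup := w.fst_mem_support_of_mem_edges hmem
    have := hble _ hsup
    have h2 : ((x, y' + 1) : ℤ × ℤ).2 = y' + 1 := rfl
    omega

lemma ext_key (hL : 3 ≤ L) (hw : w.IsCycle) (hsupp : ∀ x ∈ w.support, x ∈ inner L) :
    ∀ c ∈ extSet L w.edges.toFinset,
      SameComp (extSet L w.edges.toFinset) c ((0 : ℤ), L - 1) := by
  set F := w.edges.toFinset with hFdef
  have hF : Good L F := cycle_good L w hw hsupp
  rintro ⟨cx, cy⟩ ⟨hbox, hchi⟩
  obtain ⟨y', hy1, hy2, hy3, hy4, hy5⟩ := climb L F hF hbox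
  have hclass : {m | m ∈ box L ∧ chi F m = chi F (cx, cy)} = extSet L F := by
    rw [hchi]; rfl
  have hup : SameComp (extSet L F) (cx, cy) (cx, y') := sameComp_congr (by rw [hclass]) hy3
  have hcx0 : (0:ℤ) ≤ cx := hbox.1
  have hcxL : cx < L := hbox.2.1
  rcases hy5 with htop | ⟨hle, hnech⟩
  · subst htop
    have ht := toprow L F hF hL cx.toNat 0 le_rfl (by omega)
    rw [show ((0:ℤ) + (cx.toNat : ℤ)) = cx by omega] at ht
    exact hup.trans (SameComp.symm ht)
  · -- flip: connect through the cycle's exterior side cells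
    have hne' : chi F (cx, y') ≠ chi F (cx, y' + 1) := by
      rw [hy4]
      exact fun hc => hnech hc.symm
    have hEmem : hE cx (y' + 1) ∈ F := (chi_ne_v L F hF cx y' (by omega)).mp hne'
    obtain ⟨d, hd, hedge⟩ := dart_of_edge w hEmem
    have hcells := cellOf_of_hE hedge
    rw [show y' + 1 - 1 = y' from by ring] at hcells
    have hchiy : chi F (cx, y') = 0 := by rw [hy4, hchi]
    obtain ⟨da, hda, sa, hchia, hsame⟩ := ext_anchor L w hL hw hsupp
    have hgetrel : ∀ s0 : Bool, cellOf s0 d = (cx, y') →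
        SameComp (extSet L F) (cx, cy) ((0:ℤ), L - 1) := by
      intro s0 hs0
      have hcheq : chi F (cellOf s0 d) = chi F (cellOf sa da) := by
        rw [hs0, hchiy, hchia]
      have hrel := cycle_rel_chi L w hw hsupp hd hda s0 sa hcheq
      have hrel2 := hrel.2
      have hclass2 : {m | m ∈ box L ∧ chi F m = chi F (cellOf s0 d)} = extSet L F := by
        rw [hs0, hchiy]; rfl
      have hmid : SameComp (extSet L F) (cx, y') (cellOf sa da) := by
        rw [← hs0]
        exact sameComp_congr (by rw [hclass2]) hrel2
      exact (hup.trans hmid).trans hsame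
    rcases hcells with ⟨hA, hB⟩ | ⟨hA, hB⟩
    · exact hgetrel false hB
    · exact hgetrel true hA

theorem ext_connected (hL : 3 ≤ L) (hw : w.IsCycle)
    (hsupp : ∀ x ∈ w.support, x ∈ inner L) :
    (latticeGraph.induce (extSet L w.edges.toFinset)).Connected := by
  set F := w.edges.toFinset with hFdef
  have hF : Good L F := cycle_good L w hw hsupp
  have hmemtop : ((0:ℤ), L - 1) ∈ extSet L F :=
    ⟨⟨le_rfl, by omega, by omega, by omega⟩, chi_top L F hF (by omega)⟩
  rw [SimpleGraph.connected_iff]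
  refine ⟨?_, ?_⟩
  · intro a b
    have ha := ext_key L w hL hw hsupp a.1 a.2
    have hb := ext_key L w hL hw hsupp b.1 b.2
    obtain ⟨h1, h2, hr1⟩ := ha
    obtain ⟨h3, h4, hr2⟩ := hb
    have hab : (latticeGraph.induce (extSet L F)).Reachable a ⟨((0:ℤ), L-1), h2⟩ := by
      have : a = ⟨a.1, h1⟩ := Subtype.ext rfl
      rw [this]
      exact hr1
    have hbb : (latticeGraph.induce (extSet L F)).Reachable b ⟨((0:ℤ), L-1), h4⟩ := by
      have : b = ⟨b.1, h3⟩ := Subtype.ext rfl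
      rw [this]
      exact hr2
    have h24 : (⟨((0:ℤ), L-1), h2⟩ : ↥(extSet L F)) = ⟨((0:ℤ), L-1), h4⟩ := Subtype.ext rfl
    rw [h24] at hab
    exact hab.trans hbb.symm
  · exact ⟨⟨((0:ℤ), L - 1), hmemtop⟩⟩

lemma int_key (hL : 3 ≤ L) (hw : w.IsCycle) (hsupp : ∀ x ∈ w.support, x ∈ inner L) :
    ∀ c ∈ intSet L w.edges.toFinset, ∃ d ∈ w.darts, ∃ s : Bool,
      chi w.edges.toFinset (cellOf s d) = 1 ∧
      SameComp (intSet L w.edges.toFinset) c (cellOf s d) := by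
  set F := w.edges.toFinset with hFdef
  have hF : Good L F := cycle_good L w hw hsupp
  rintro ⟨cx, cy⟩ ⟨hbox, hchi⟩
  obtain ⟨y', hy1, hy2, hy3, hy4, hy5⟩ := climb L F hF hbox
  have hclass : {m | m ∈ box L ∧ chi F m = chi F (cx, cy)} = intSet L F := by
    rw [hchi]; rfl
  have hup : SameComp (intSet L F) (cx, cy) (cx, y') := sameComp_congr (by rw [hclass]) hy3
  rcases hy5 with htop | ⟨hle, hnech⟩
  · exfalso
    subst htop
    have h0 : chi F (cx, L - 1) = 0 := chi_top L F hF (by omega)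
    rw [hy4, hchi] at h0
    exact absurd h0 (by decide)
  · have hne' : chi F (cx, y') ≠ chi F (cx, y' + 1) := by
      rw [hy4]
      exact fun hc => hnech hc.symm
    have hcx0 : (0:ℤ) ≤ cx := hbox.1
    have hEmem : hE cx (y' + 1) ∈ F := (chi_ne_v L F hF cx y' (by omega)).mp hne'
    obtain ⟨d, hd, hedge⟩ := dart_of_edge w hEmem
    have hcells := cellOf_of_hE hedge
    rw [show y' + 1 - 1 = y' from by ring] at hcells
    have hchiy : chi F (cx, y') = 1 := by rw [hy4, hchi]
    rcases hcells with ⟨hA, hB⟩ | ⟨hA, hB⟩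
    · exact ⟨d, hd, false, by rw [hB, hchiy], by rw [hB]; exact hup⟩
    · exact ⟨d, hd, true, by rw [hA, hchiy], by rw [hA]; exact hup⟩

lemma int_nonempty (hw : w.IsCycle) (hsupp : ∀ x ∈ w.support, x ∈ inner L) :
    ∃ c, c ∈ intSet L w.edges.toFinset := by
  obtain ⟨d, hd⟩ := exists_dart w hw
  have hne := cycle_sides_ne L w hw hsupp hd
  have hb1 := cellOf_mem_box L w hsupp hd true
  have hb0 := cellOf_mem_box L w hsupp hd false
  rcases zmod2_cases (chi w.edges.toFinset (cellOf true d)) with h | h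
  · rcases zmod2_cases (chi w.edges.toFinset (cellOf false d)) with h' | h'
    · exact absurd (h.trans h'.symm) hne
    · exact ⟨cellOf false d, hb0, h'⟩
  · exact ⟨cellOf true d, hb1, h⟩

theorem int_connected (hL : 3 ≤ L) (hw : w.IsCycle)
    (hsupp : ∀ x ∈ w.support, x ∈ inner L) :
    (latticeGraph.induce (intSet L w.edges.toFinset)).Connected := by
  set F := w.edges.toFinset with hFdef
  have hF : Good L F := cycle_good L w hw hsupp
  rw [SimpleGraph.connected_iff]
  refine ⟨?_, ?_⟩
  · intro a b
    obtain ⟨d1, hd1, s1, hc1, hs1⟩ := int_key L w hL hw hsupp a.1 a.2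
    obtain ⟨d2, hd2, s2, hc2, hs2⟩ := int_key L w hL hw hsupp b.1 b.2
    have hcheq : chi F (cellOf s1 d1) = chi F (cellOf s2 d2) := by rw [hc1, hc2]
    have hrel := cycle_rel_chi L w hw hsupp hd1 hd2 s1 s2 hcheq
    have hclass : {m | m ∈ box L ∧ chi F m = chi F (cellOf s1 d1)} = intSet L F := by
      rw [hc1]; rfl
    have hmid : SameComp (intSet L F) (cellOf s1 d1) (cellOf s2 d2) :=
      sameComp_congr (by rw [hclass]) hrel.2
    have htot := (hs1.trans hmid).trans hs2.symm
    obtain ⟨h1, h2, hr⟩ := htot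
    have ha : a = ⟨a.1, h1⟩ := Subtype.ext rfl
    have hb : b = ⟨b.1, h2⟩ := Subtype.ext rfl
    rw [ha, hb]
    exact hr
  · obtain ⟨c, hc⟩ := int_nonempty L w hw hsupp
    exact ⟨⟨c, hc⟩⟩

end Cyc2
end SAP
namespace SAP
open SimpleGraph

variable (L : ℤ) (F : Finset (Sym2 (ℤ × ℤ)))

/-- the set of edges recoverable from an interior region -/
def edgeSetOf (L : ℤ) (I : Set (ℤ × ℤ)) : Set (Sym2 (ℤ × ℤ)) :=
  {e | (∃ x y : ℤ, (x, y) ∈ box L ∧ (x + 1, y) ∈ box L ∧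
          ¬(((x, y) : ℤ × ℤ) ∈ I ↔ ((x + 1, y) : ℤ × ℤ) ∈ I) ∧ e = vE (x + 1) y) ∨
       (∃ x y : ℤ, (x, y) ∈ box L ∧ (x, y + 1) ∈ box L ∧
          ¬(((x, y) : ℤ × ℤ) ∈ I ↔ ((x, y + 1) : ℤ × ℤ) ∈ I) ∧ e = hE x (y + 1))}

lemma I_mem_iff {p : ℤ × ℤ} (hp : p ∈ box L) : p ∈ intSet L F ↔ chi F p = 1 :=
  ⟨fun h => h.2, fun h => ⟨hp, h⟩⟩

lemma chi_ne_not_iff {p q : ℤ × ℤ} (hp : p ∈ box L) (hq : q ∈ box L) :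
    chi F p ≠ chi F q ↔ ¬(p ∈ intSet L F ↔ q ∈ intSet L F) := by
  rw [not_iff_not.mpr (iff_congr (I_mem_iff L F hp) (I_mem_iff L F hq))]
  rcases zmod2_cases (chi F p) with h1 | h1 <;> rcases zmod2_cases (chi F q) with h2 | h2 <;>
    rw [h1, h2] <;> decide

lemma recover (hF : Good L F) (e : Sym2 (ℤ × ℤ)) :
    e ∈ F ↔ e ∈ edgeSetOf L (intSet L F) := by
  constructor
  · intro he
    rcases hF.edge_form L F he with ⟨a, y, h1, h2, h3, h4, rfl⟩ | ⟨x, b, h1, h2, h3, h4, rfl⟩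
    · left
      refine ⟨a - 1, y, ⟨show (0:ℤ) ≤ a - 1 by omega, show a - 1 < L by omega,
        show (0:ℤ) ≤ y by omega, show y < L by omega⟩,
        ⟨show (0:ℤ) ≤ a - 1 + 1 by omega, show a - 1 + 1 < L by omega,
        show (0:ℤ) ≤ y by omega, show y < L by omega⟩, ?_, ?_⟩
      · rw [← chi_ne_not_iff]
        · have := (chi_ne_h F (a - 1) y (by omega)).mpr (by rwa [show a - 1 + 1 = a by ring])
          exact this
        · exact ⟨show (0:ℤ) ≤ a - 1 by omega, show a - 1 < L by omega,
            show (0:ℤ) ≤ y by omega, show y < L by omega⟩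
        · exact ⟨show (0:ℤ) ≤ a - 1 + 1 by omega, show a - 1 + 1 < L by omega,
            show (0:ℤ) ≤ y by omega, show y < L by omega⟩
      · rw [show a - 1 + 1 = a by ring]
    · right
      refine ⟨x, b - 1, ⟨show (0:ℤ) ≤ x by omega, show x < L by omega,
        show (0:ℤ) ≤ b - 1 by omega, show b - 1 < L by omega⟩,
        ⟨show (0:ℤ) ≤ x by omega, show x < L by omega,
        show (0:ℤ) ≤ b - 1 + 1 by omega, show b - 1 + 1 < L by omega⟩, ?_, ?_⟩
      · rw [← chi_ne_not_iff]
        · have := (chi_ne_v L F hF x (b - 1) (by omega)).mpr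
            (by rwa [show b - 1 + 1 = b by ring])
          exact this
        · exact ⟨show (0:ℤ) ≤ x by omega, show x < L by omega,
            show (0:ℤ) ≤ b - 1 by omega, show b - 1 < L by omega⟩
        · exact ⟨show (0:ℤ) ≤ x by omega, show x < L by omega,
            show (0:ℤ) ≤ b - 1 + 1 by omega, show b - 1 + 1 < L by omega⟩
      · rw [show b - 1 + 1 = b by ring]
  · intro he
    rcases he with ⟨x, y, hb1, hb2, hne, rfl⟩ | ⟨x, y, hb1, hb2, hne, rfl⟩
    · have h0 : (0:ℤ) ≤ x := hb1.1
      exact (chi_ne_h F x y h0).mp ((chi_ne_not_iff L F hb1 hb2).mpr hne)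
    · have h0 : (0:ℤ) ≤ x := hb1.1
      exact (chi_ne_v L F hF x y h0).mp ((chi_ne_not_iff L F hb1 hb2).mpr hne)

lemma corner_not_mem (hL : 3 ≤ L) : (((0:ℤ), (0:ℤ)) : ℤ × ℤ) ∉ intSet L F := by
  intro h
  have h2 := h.2
  rw [chi_left F le_rfl] at h2
  exact absurd h2 (by decide)

lemma corner_mem_box (hL : 3 ≤ L) : (((0:ℤ), (0:ℤ)) : ℤ × ℤ) ∈ box L :=
  ⟨le_rfl, by omega, le_rfl, by omega⟩

end SAP
namespace SAP
open SimpleGraph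

lemma adj_translate {a b c : ℤ × ℤ} (h : latticeGraph.Adj a b) :
    latticeGraph.Adj (a + c) (b + c) := by
  have hf : ∀ p q : ℤ × ℤ, (p + q).1 = p.1 + q.1 := fun _ _ => rfl
  have hs : ∀ p q : ℤ × ℤ, (p + q).2 = p.2 + q.2 := fun _ _ => rfl
  rcases h with ⟨h1, h2 | h2⟩ | ⟨h1, h2 | h2⟩
  · exact Or.inl ⟨by rw [hf, hf, h1], Or.inl (by rw [hs, hs, h2]; ring)⟩
  · exact Or.inl ⟨by rw [hf, hf, h1], Or.inr (by rw [hs, hs, h2]; ring)⟩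
  · exact Or.inr ⟨by rw [hs, hs, h1], Or.inl (by rw [hf, hf, h2]; ring)⟩
  · exact Or.inr ⟨by rw [hs, hs, h1], Or.inr (by rw [hf, hf, h2]; ring)⟩

/-- translation by (1,1) as a graph homomorphism from the box graph to the lattice -/
def transHom (M : ℕ) : boxGraph M →g latticeGraph where
  toFun p := p + ((1:ℤ), (1:ℤ))
  map_rel' := fun h => adj_translate h.1

lemma transHom_injective (M : ℕ) : Function.Injective (transHom M) := by
  intro p q h
  have : p + ((1:ℤ), (1:ℤ)) = q + ((1:ℤ), (1:ℤ)) := h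
  exact add_left_injective _ this

lemma box_support (M : ℕ) {v : ℤ × ℤ} (w : (boxGraph M).Walk v v) (hw : w.IsCycle) :
    ∀ u ∈ w.support, u ∈ vtxBox M := by
  intro u hu
  obtain ⟨e, he, hue⟩ := exists_edge_incident w hw.not_nil u hu
  obtain ⟨z, rfl⟩ := Sym2.mem_iff_exists.mp hue
  have hadj := (SimpleGraph.mem_edgeSet _).mp (w.edges_subset_edgeSet he)
  exact hadj.2.1

lemma transport (L : ℕ) (hL : 3 ≤ L) {v : ℤ × ℤ} (w : (boxGraph (L-2)).Walk v v)
    (hw : w.IsCycle) :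
    ∃ (v' : ℤ × ℤ) (w' : latticeGraph.Walk v' v'), w'.IsCycle ∧
      (∀ x ∈ w'.support, x ∈ inner (L:ℤ)) ∧
      w'.edges = w.edges.map (Sym2.map (· + ((1:ℤ), (1:ℤ)))) := by
  refine ⟨_, w.map (transHom (L-2)), ?_, ?_, ?_⟩
  · exact (Walk.map_isCycle_iff_of_injective (transHom_injective (L-2))).mpr hw
  · intro x hx
    rw [Walk.support_map, List.mem_map] at hx
    obtain ⟨u, hu, rfl⟩ := hx
    obtain ⟨h1, h2, h3, h4⟩ := box_support (L-2) w hw u hu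
    have H1 : (0:ℤ) ≤ u.1 := h1
    have H2 : u.1 ≤ ((L-2 : ℕ) : ℤ) := h2
    have H3 : (0:ℤ) ≤ u.2 := h3
    have H4 : u.2 ≤ ((L-2 : ℕ) : ℤ) := h4
    have hcast : ((L-2 : ℕ) : ℤ) = (L:ℤ) - 2 := by
      have : (2:ℕ) ≤ L := by omega
      omega
    refine ⟨?_, ?_, ?_, ?_⟩
    · show 1 ≤ u.1 + 1; omega
    · show u.1 + 1 ≤ (L:ℤ) - 1; omega
    · show 1 ≤ u.2 + 1; omega
    · show u.2 + 1 ≤ (L:ℤ) - 1; omega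
  · rw [Walk.edges_map]
    rfl

lemma cellBox_finite (L : ℕ) : (cellBox L).Finite := by
  apply Set.Finite.subset (Set.finite_Icc ((0:ℤ), (0:ℤ)) (((L:ℤ)), ((L:ℤ))))
  rintro ⟨x, y⟩ ⟨h1, h2, h3, h4⟩
  have H1 : (0:ℤ) ≤ x := h1
  have H2 : x < (L:ℤ) := h2
  have H3 : (0:ℤ) ≤ y := h3
  have H4 : y < (L:ℤ) := h4
  rw [Set.mem_Icc]
  exact ⟨⟨by omega, by omega⟩, ⟨by omega, by omega⟩⟩

lemma part_finite (L : ℕ) : Finite {p : Set (ℤ × ℤ) × Set (ℤ × ℤ) //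
    p.1.Nonempty ∧ p.2.Nonempty ∧ regionConnected p.1 ∧ regionConnected p.2 ∧
    Disjoint p.1 p.2 ∧ p.1 ∪ p.2 = cellBox L} := by
  have hfin : Finite {t : Set (ℤ × ℤ) // t ⊆ cellBox L} := by
    have h1 := (cellBox_finite L).finite_subsets
    exact h1.to_subtype
  set f : {p : Set (ℤ × ℤ) × Set (ℤ × ℤ) //
      p.1.Nonempty ∧ p.2.Nonempty ∧ regionConnected p.1 ∧ regionConnected p.2 ∧
      Disjoint p.1 p.2 ∧ p.1 ∪ p.2 = cellBox L} → {t : Set (ℤ × ℤ) // t ⊆ cellBox L} :=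
    fun p => ⟨p.1.1, by
      have hu := p.2.2.2.2.2.2
      intro x hx
      rw [← hu]
      exact Or.inl hx⟩ with hf
  have hsnd : ∀ r : {p : Set (ℤ × ℤ) × Set (ℤ × ℤ) //
      p.1.Nonempty ∧ p.2.Nonempty ∧ regionConnected p.1 ∧ regionConnected p.2 ∧
      Disjoint p.1 p.2 ∧ p.1 ∪ p.2 = cellBox L}, r.1.2 = cellBox L \ r.1.1 := by
    intro r
    obtain ⟨-, -, -, -, hdis, huni⟩ := r.2
    ext x
    constructor
    · intro hx
      refine ⟨?_, ?_⟩
      · rw [← huni]; exact Or.inr hx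
      · exact fun hx1 => (Set.disjoint_left.mp hdis) hx1 hx
    · rintro ⟨hxc, hx1⟩
      rw [← huni] at hxc
      rcases hxc with h | h
      · exact absurd h hx1
      · exact h
  apply Finite.of_injective f
  intro p q hpq
  have hfst : p.1.1 = q.1.1 := congrArg Subtype.val hpq
  apply Subtype.ext
  apply Prod.ext hfst
  rw [hsnd p, hsnd q, hfst]

end SAP

open SimpleGraph SAP in
/-- Every self-avoiding polygon fitting inside an `(L-2) × (L-2)` square
of cells (i.e. a cycle in the grid graph on `{0,…,L-2}²`), surrounded by a border of empty
cells of width one, yields a partition of the `L × L` grid into two connected regions;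
hence `P_{L-2}(1) ≤ G_L(1)/2`, i.e. `2·P_{L-2}(1)` is at most the number of ordered
partitions of the `L × L` grid into two connected regions. -/
theorem polygons_le_half_partitions (L : ℕ) (hL : 3 ≤ L) :
    2 * numCycles (L - 2) ≤ numOrderedPartitions L := by
  classical
  have hLZ : (3:ℤ) ≤ (L:ℤ) := by exact_mod_cast hL
  set τ : Sym2 (ℤ × ℤ) → Sym2 (ℤ × ℤ) := Sym2.map (· + ((1:ℤ),(1:ℤ))) with hτ
  have hτinj : Function.Injective τ := Sym2.map.injective (add_left_injective _)
  have hprop : ∀ c : {s : Set (Sym2 (ℤ × ℤ)) //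
      ∃ (v : ℤ × ℤ) (w : (boxGraph (L-2)).Walk v v), w.IsCycle ∧ {e | e ∈ w.edges} = s},
      ∃ I : Set (ℤ × ℤ), I.Nonempty ∧ regionConnected I ∧
        regionConnected (cellBox L \ I) ∧ (((0:ℤ),(0:ℤ)) : ℤ × ℤ) ∈ cellBox L ∧
        (((0:ℤ),(0:ℤ)) : ℤ × ℤ) ∉ I ∧
        I ⊆ cellBox L ∧ (∀ e, e ∈ c.1 ↔ τ e ∈ edgeSetOf (L:ℤ) I) := by
    rintro ⟨s, v, w0, hcyc, hset⟩
    obtain ⟨v', w', hcyc', hsupp', hedges⟩ := SAP.transport L hL w0 hcyc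
    have hgood : Good (L:ℤ) w'.edges.toFinset := cycle_good (L:ℤ) w' hcyc' hsupp'
    have hbox_eq : cellBox L = box (L:ℤ) := rfl
    refine ⟨intSet (L:ℤ) w'.edges.toFinset, ?_, ?_, ?_, ?_, ?_, ?_, ?_⟩
    · obtain ⟨cc, hcc⟩ := int_nonempty (L:ℤ) w' hcyc' hsupp'
      exact ⟨cc, hcc⟩
    · exact int_connected (L:ℤ) w' hLZ hcyc' hsupp'
    · show (latticeGraph.induce (cellBox L \ intSet (L:ℤ) w'.edges.toFinset)).Connected
      rw [hbox_eq, ← ext_eq_diff]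
      exact ext_connected (L:ℤ) w' hLZ hcyc' hsupp'
    · exact corner_mem_box (L:ℤ) hLZ
    · exact corner_not_mem (L:ℤ) _ hLZ
    · intro p hp; exact hp.1
    · intro e
      have h1 : e ∈ s ↔ e ∈ w0.edges := by rw [← hset]; rfl
      have h2 : e ∈ w0.edges ↔ τ e ∈ w0.edges.map τ :=
        (List.mem_map_of_injective hτinj).symm
      have h4 : τ e ∈ w0.edges.map τ ↔ τ e ∈ w'.edges.toFinset := by
        rw [List.mem_toFinset, hedges]
      rw [show e ∈ (⟨s, v, w0, hcyc, hset⟩ : {s : Set (Sym2 (ℤ × ℤ)) //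
        ∃ (v : ℤ × ℤ) (w : (boxGraph (L-2)).Walk v v), w.IsCycle ∧ {e | e ∈ w.edges} = s}).1
          ↔ e ∈ s from Iff.rfl, h1, h2, h4]
      exact recover (L:ℤ) _ hgood (τ e)
  choose Ifun hne hconn1 hconn2 hcornbox hcorn hsub hrec using hprop
  have hIinj : ∀ c c', Ifun c = Ifun c' → c = c' := by
    intro c c' h
    apply Subtype.ext
    ext e
    rw [hrec c e, hrec c' e, h]
  set Φ : Fin 2 × {s : Set (Sym2 (ℤ × ℤ)) // ∃ (v : ℤ × ℤ) (w : (boxGraph (L-2)).Walk v v),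
      w.IsCycle ∧ {e | e ∈ w.edges} = s} → {p : Set (ℤ × ℤ) × Set (ℤ × ℤ) //
      p.1.Nonempty ∧ p.2.Nonempty ∧ regionConnected p.1 ∧ regionConnected p.2 ∧
      Disjoint p.1 p.2 ∧ p.1 ∪ p.2 = cellBox L} := fun bc =>
    if bc.1 = 0 then
      ⟨(Ifun bc.2, cellBox L \ Ifun bc.2),
        hne bc.2, ⟨((0:ℤ),(0:ℤ)), hcornbox bc.2, hcorn bc.2⟩, hconn1 bc.2, hconn2 bc.2,
        Set.disjoint_right.mpr (fun x hx => hx.2),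
        Set.union_diff_cancel (hsub bc.2)⟩
    else
      ⟨(cellBox L \ Ifun bc.2, Ifun bc.2),
        ⟨((0:ℤ),(0:ℤ)), hcornbox bc.2, hcorn bc.2⟩, hne bc.2, hconn2 bc.2, hconn1 bc.2,
        Set.disjoint_left.mpr (fun x hx => hx.2),
        Set.diff_union_of_subset (hsub bc.2)⟩ with hΦ
  have hΦ0 : ∀ c, (Φ (0, c)).1 = (Ifun c, cellBox L \ Ifun c) := fun c => rfl
  have hΦ1 : ∀ c, (Φ (1, c)).1 = (cellBox L \ Ifun c, Ifun c) := fun c => rfl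
  have hΦinj : Function.Injective Φ := by
    rintro ⟨b, c⟩ ⟨b', c'⟩ heq
    have hb2 : ∀ (x : Fin 2), x = 0 ∨ x = 1 := by decide
    have hval : (Φ (b, c)).1 = (Φ (b', c')).1 := congrArg Subtype.val heq
    rcases hb2 b with rfl | rfl <;> rcases hb2 b' with rfl | rfl
    · have h1 : Ifun c = Ifun c' :=
        (congrArg Prod.fst (hΦ0 c)).symm.trans
          ((congrArg Prod.fst hval).trans (congrArg Prod.fst (hΦ0 c')))
      rw [hIinj c c' h1]
    · exfalso
      have h1 : Ifun c = cellBox L \ Ifun c' :=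
        (congrArg Prod.fst (hΦ0 c)).symm.trans
          ((congrArg Prod.fst hval).trans (congrArg Prod.fst (hΦ1 c')))
      have hc0 : (((0:ℤ),(0:ℤ)) : ℤ × ℤ) ∈ cellBox L \ Ifun c' := ⟨hcornbox c', hcorn c'⟩
      rw [← h1] at hc0
      exact hcorn c hc0
    · exfalso
      have h1 : cellBox L \ Ifun c = Ifun c' :=
        (congrArg Prod.fst (hΦ1 c)).symm.trans
          ((congrArg Prod.fst hval).trans (congrArg Prod.fst (hΦ0 c')))
      have hc0 : (((0:ℤ),(0:ℤ)) : ℤ × ℤ) ∈ cellBox L \ Ifun c := ⟨hcornbox c, hcorn c⟩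
      rw [h1] at hc0
      exact hcorn c' hc0
    · have h1 : Ifun c = Ifun c' :=
        (congrArg Prod.snd (hΦ1 c)).symm.trans
          ((congrArg Prod.snd hval).trans (congrArg Prod.snd (hΦ1 c')))
      rw [hIinj c c' h1]
  haveI := SAP.part_finite L
  have hcard := Nat.card_le_card_of_injective Φ hΦinj
  rw [Nat.card_prod] at hcard
  have hfin2 : Nat.card (Fin 2) = 2 := by simp
  rw [hfin2] at hcard
  exact hcard
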